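/- arXiv:2411.06502 — 8 statements merged into one kernel-verified Lean document; each statement's English description precedes it below -/
import Mathlib

section
/- For any two integer sequences and similarity defined via a nonnegative matching-weight function, the string similarity sim(A,B) = max over all pairs of strictly increasing index sequences i_1<...<i_k in [1,n], j_1<...<j_k in [1,m] of the sum of η(a_{i_t}, b_{j_t}), satisfies sim(A,B) = Σ_i δ(a_i,ε) + Σ_j δ(ε,b_j) - ed(A,B), where ed is the weighted edit distance with costs δ and η(a,b) := δ(a,ε)+δ(ε,b)-δ(a,b). -/
namespace Stmt0

def ed (δ : ℤ → ℤ → ℤ) (δdel δins : ℤ → ℤ) : List ℤ → List ℤ → ℤ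
  | [], [] => 0
  | a :: A, [] => δdel a + ed δ δdel δins A []
  | [], b :: B => δins b + ed δ δdel δins [] B
  | a :: A, b :: B =>
      min (δ a b + ed δ δdel δins A B)
        (min (δdel a + ed δ δdel δins A (b :: B))
             (δins b + ed δ δdel δins (a :: A) B))
termination_by A B => A.length + B.length

def MatchOK (A B : List ℤ) (M : List (ℕ × ℕ)) : Prop :=
  M.Chain' (fun p q => p.1 < q.1 ∧ p.2 < q.2) ∧
  ∀ p ∈ M, p.1 < A.length ∧ p.2 < B.length

def matchWt (η : ℤ → ℤ → ℤ) (A B : List ℤ) (M : List (ℕ × ℕ)) : ℤ :=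
  (M.map (fun p => η (A.getD p.1 0) (B.getD p.2 0))).sum

def simSet (η : ℤ → ℤ → ℤ) (A B : List ℤ) : Set ℤ :=
  {s | ∃ M, MatchOK A B M ∧ s = matchWt η A B M}

-- auxiliary
instance : IsTrans (ℕ × ℕ) (fun p q => p.1 < q.1 ∧ p.2 < q.2) :=
  ⟨fun _ _ _ h1 h2 => ⟨h1.1.trans h2.1, h1.2.trans h2.2⟩⟩

lemma matchOK_iff (A B : List ℤ) (M : List (ℕ × ℕ)) :
    MatchOK A B M ↔ M.Pairwise (fun p q => p.1 < q.1 ∧ p.2 < q.2) ∧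
      ∀ p ∈ M, p.1 < A.length ∧ p.2 < B.length := by
  rw [MatchOK, List.Chain', List.isChain_iff_pairwise]

lemma matchWt_nil (η : ℤ → ℤ → ℤ) (A B : List ℤ) : matchWt η A B [] = 0 := rfl

lemma matchWt_cons (η : ℤ → ℤ → ℤ) (A B : List ℤ) (p : ℕ × ℕ) (M : List (ℕ × ℕ)) :
    matchWt η A B (p :: M) = η (A.getD p.1 0) (B.getD p.2 0) + matchWt η A B M := by
  simp [matchWt]

lemma ed_nil_right (δ : ℤ → ℤ → ℤ) (δdel δins : ℤ → ℤ) (A : List ℤ) :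
    ed δ δdel δins A [] = (A.map δdel).sum := by
  induction A with
  | nil => simp [ed]
  | cons a A ih => simp [ed, ih]

lemma ed_nil_left (δ : ℤ → ℤ → ℤ) (δdel δins : ℤ → ℤ) (B : List ℤ) :
    ed δ δdel δins [] B = (B.map δins).sum := by
  induction B with
  | nil => simp [ed]
  | cons b B ih => simp [ed, ih]

lemma ed_cons_cons (δ : ℤ → ℤ → ℤ) (δdel δins : ℤ → ℤ) (a b : ℤ) (A B : List ℤ) :
    ed δ δdel δins (a :: A) (b :: B) =
      min (δ a b + ed δ δdel δins A B)
        (min (δdel a + ed δ δdel δins A (b :: B))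
             (δins b + ed δ δdel δins (a :: A) B)) := by
  rw [ed]

lemma ed_le_del (δ : ℤ → ℤ → ℤ) (δdel δins : ℤ → ℤ) (a : ℤ) (A B : List ℤ) :
    ed δ δdel δins (a :: A) B ≤ δdel a + ed δ δdel δins A B := by
  cases B with
  | nil => simp [ed]
  | cons b B =>
      rw [ed_cons_cons]
      exact le_trans (min_le_right _ _) (min_le_left _ _)

lemma ed_le_total (δ : ℤ → ℤ → ℤ) (δdel δins : ℤ → ℤ) (A B : List ℤ) :
    ed δ δdel δins A B ≤ (A.map δdel).sum + (B.map δins).sum := by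
  induction A with
  | nil => simp [ed_nil_left]
  | cons a A ih =>
      calc ed δ δdel δins (a :: A) B ≤ δdel a + ed δ δdel δins A B := ed_le_del ..
        _ ≤ (List.map δdel (a :: A)).sum + (List.map δins B).sum := by
            simp; linarith

-- weight shift lemmas
lemma matchWt_shift_fst (η : ℤ → ℤ → ℤ) (a : ℤ) (A B : List ℤ) (M : List (ℕ × ℕ))
    (h : ∀ p ∈ M, 0 < p.1) :
    matchWt η (a :: A) B M = matchWt η A B (M.map fun p => (p.1 - 1, p.2)) := by
  unfold matchWt
  rw [List.map_map]
  congr 1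
  apply List.map_congr_left
  intro p hp
  obtain ⟨k, hk⟩ := Nat.exists_eq_succ_of_ne_zero (Nat.pos_iff_ne_zero.1 (h p hp))
  simp [hk]

lemma matchWt_shift_snd (η : ℤ → ℤ → ℤ) (b : ℤ) (A B : List ℤ) (M : List (ℕ × ℕ))
    (h : ∀ p ∈ M, 0 < p.2) :
    matchWt η A (b :: B) M = matchWt η A B (M.map fun p => (p.1, p.2 - 1)) := by
  unfold matchWt
  rw [List.map_map]
  congr 1
  apply List.map_congr_left
  intro p hp
  obtain ⟨k, hk⟩ := Nat.exists_eq_succ_of_ne_zero (Nat.pos_iff_ne_zero.1 (h p hp))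
  simp [hk]

-- Claim A: ed ≤ total - matchWt
lemma ed_le_sub (δ : ℤ → ℤ → ℤ) (δdel δins : ℤ → ℤ) :
    ∀ (A B : List ℤ) (M : List (ℕ × ℕ)), MatchOK A B M →
      ed δ δdel δins A B ≤ (A.map δdel).sum + (B.map δins).sum
        - matchWt (fun a b => δdel a + δins b - δ a b) A B M
  | A, B, [], _ => by
      rw [matchWt_nil]; simpa using ed_le_total δ δdel δins A B
  | [], B, (i, j) :: M, h => by
      exact absurd ((h.2 (i, j) (by simp)).1) (by simp)
  | A, [], (i, j) :: M, h => by
      exact absurd ((h.2 (i, j) (by simp)).2) (by simp)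
  | a :: A, b :: B, (i, j) :: M, h => by
      rw [matchOK_iff] at h
      obtain ⟨hpw, hbd⟩ := h
      rw [List.pairwise_cons] at hpw
      match i, j with
      | 0, 0 =>
          -- substitution
          set M' := M.map fun p => (p.1 - 1, p.2 - 1) with hM'
          have hpos : ∀ p ∈ M, 0 < p.1 ∧ 0 < p.2 := fun p hp =>
            ⟨(hpw.1 p hp).1, (hpw.1 p hp).2⟩
          have hok : MatchOK A B M' := by
            rw [matchOK_iff]
            constructor
            · rw [hM', List.pairwise_map]
              refine hpw.2.imp_of_mem ?_
              intro p q hp hq hr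
              have h1 := (hpos p hp).1
              have h2 := (hpos p hp).2
              have h3 := hr.1
              have h4 := hr.2
              exact ⟨by omega, by omega⟩
            · intro p hp
              rw [hM'] at hp
              obtain ⟨q, hq, rfl⟩ := List.mem_map.1 hp
              have h1 := hbd q (List.mem_cons_of_mem _ hq)
              have h2 := hpos q hq
              simp only [List.length_cons] at h1 ⊢
              omega
          have ih := ed_le_sub δ δdel δins A B M' hok
          have hw : matchWt (fun a b => δdel a + δins b - δ a b) (a :: A) (b :: B)
              ((0, 0) :: M) = (δdel a + δins b - δ a b) +
              matchWt (fun a b => δdel a + δins b - δ a b) A B M' := by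
            rw [matchWt_cons]
            congr 1
            rw [matchWt_shift_fst _ _ _ _ _ (fun p hp => (hpos p hp).1),
                matchWt_shift_snd _ _ _ _ _ ?_]
            · rw [hM', List.map_map]; rfl
            · intro p hp
              obtain ⟨q, hq, rfl⟩ := List.mem_map.1 hp
              exact (hpos q hq).2
          have hmin : ed δ δdel δins (a :: A) (b :: B) ≤ δ a b + ed δ δdel δins A B := by
            rw [ed_cons_cons]
            exact min_le_left _ _
          rw [hw]
          simp only [List.map_cons, List.sum_cons]
          linarith
      | 0, Nat.succ j =>
          -- insertion on b
          set M' := ((0, j + 1) :: M).map fun p => (p.1, p.2 - 1) with hM'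
          have hpos : ∀ p ∈ (0, j + 1) :: M, 0 < p.2 := by
            intro p hp
            rcases List.mem_cons.1 hp with rfl | hp
            · simp
            · exact Nat.lt_of_le_of_lt (Nat.zero_le _) (hpw.1 _ hp).2
          have hok : MatchOK (a :: A) B M' := by
            rw [matchOK_iff]
            constructor
            · rw [hM', List.pairwise_map, List.pairwise_cons]
              constructor
              · intro q hq
                have h1 := (hpw.1 q hq).1
                have h2 := (hpw.1 q hq).2
                exact ⟨by omega, by omega⟩
              · refine hpw.2.imp_of_mem ?_
                intro p q hp hq hr
                have h1 := hpos p (List.mem_cons_of_mem _ hp)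
                have h2 := hr.1
                have h3 := hr.2
                exact ⟨by omega, by omega⟩
            · intro p hp
              rw [hM'] at hp
              obtain ⟨q, hq, rfl⟩ := List.mem_map.1 hp
              have h1 := hbd q hq
              have h2 := hpos q hq
              simp only [List.length_cons] at h1 ⊢
              omega
          have ih := ed_le_sub δ δdel δins (a :: A) B M' hok
          have hw : matchWt (fun a b => δdel a + δins b - δ a b) (a :: A) (b :: B)
              ((0, j + 1) :: M) =
              matchWt (fun a b => δdel a + δins b - δ a b) (a :: A) B M' := by
            rw [matchWt_shift_snd _ _ _ _ _ hpos, hM']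
          have hmin : ed δ δdel δins (a :: A) (b :: B) ≤
              δins b + ed δ δdel δins (a :: A) B := by
            rw [ed_cons_cons]
            exact le_trans (min_le_right _ _) (min_le_right _ _)
          rw [hw]
          simp only [List.map_cons, List.sum_cons] at ih ⊢
          linarith
      | Nat.succ i, j =>
          -- deletion of a
          set M' := ((i + 1, j) :: M).map fun p => (p.1 - 1, p.2) with hM'
          have hpos : ∀ p ∈ (i + 1, j) :: M, 0 < p.1 := by
            intro p hp
            rcases List.mem_cons.1 hp with rfl | hp
            · simp
            · exact Nat.lt_of_le_of_lt (Nat.zero_le _) (hpw.1 _ hp).1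
          have hok : MatchOK A (b :: B) M' := by
            rw [matchOK_iff]
            constructor
            · rw [hM', List.pairwise_map, List.pairwise_cons]
              constructor
              · intro q hq
                have h1 := (hpw.1 q hq).1
                have h2 := (hpw.1 q hq).2
                exact ⟨by omega, by omega⟩
              · refine hpw.2.imp_of_mem ?_
                intro p q hp hq hr
                have h1 := hpos p (List.mem_cons_of_mem _ hp)
                have h2 := hr.1
                have h3 := hr.2
                exact ⟨by omega, by omega⟩
            · intro p hp
              rw [hM'] at hp
              obtain ⟨q, hq, rfl⟩ := List.mem_map.1 hp
              have h1 := hbd q hq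
              have h2 := hpos q hq
              simp only [List.length_cons] at h1 ⊢
              omega
          have ih := ed_le_sub δ δdel δins A (b :: B) M' hok
          have hw : matchWt (fun a b => δdel a + δins b - δ a b) (a :: A) (b :: B)
              ((i + 1, j) :: M) =
              matchWt (fun a b => δdel a + δins b - δ a b) A (b :: B) M' := by
            rw [matchWt_shift_fst _ _ _ _ _ hpos, hM']
          have hmin : ed δ δdel δins (a :: A) (b :: B) ≤
              δdel a + ed δ δdel δins A (b :: B) := ed_le_del ..
          rw [hw]
          simp only [List.map_cons, List.sum_cons] at ih ⊢
          linarith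
termination_by A B M => A.length + B.length

-- Claim B: exists matching achieving total - ed
lemma exists_match (δ : ℤ → ℤ → ℤ) (δdel δins : ℤ → ℤ) :
    ∀ (A B : List ℤ), ∃ M, MatchOK A B M ∧
      matchWt (fun a b => δdel a + δins b - δ a b) A B M =
        (A.map δdel).sum + (B.map δins).sum - ed δ δdel δins A B
  | [], B => ⟨[], ⟨List.isChain_nil, by simp⟩, by simp [matchWt_nil, ed_nil_left]⟩
  | a :: A, [] => ⟨[], ⟨List.isChain_nil, by simp⟩, by simp [matchWt_nil, ed_nil_right]⟩
  | a :: A, b :: B => by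
      have hed : ed δ δdel δins (a :: A) (b :: B) =
        min (δ a b + ed δ δdel δins A B)
          (min (δdel a + ed δ δdel δins A (b :: B))
               (δins b + ed δ δdel δins (a :: A) B)) := ed_cons_cons ..
      rcases le_or_gt (δ a b + ed δ δdel δins A B)
          (min (δdel a + ed δ δdel δins A (b :: B))
               (δins b + ed δ δdel δins (a :: A) B)) with hc | hc
      · -- substitution branch
        obtain ⟨M, hok, hw⟩ := exists_match δ δdel δins A B
        rw [matchOK_iff] at hok
        refine ⟨(0, 0) :: M.map (fun p => (p.1 + 1, p.2 + 1)), ?_, ?_⟩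
        · rw [matchOK_iff, List.pairwise_cons]
          refine ⟨⟨?_, ?_⟩, ?_⟩
          · intro q hq
            obtain ⟨p, _, rfl⟩ := List.mem_map.1 hq
            simp
          · rw [List.pairwise_map]
            exact hok.1.imp fun h => ⟨by simpa using h.1, by simpa using h.2⟩
          · intro p hp
            rcases List.mem_cons.1 hp with rfl | hp
            · simp
            · obtain ⟨q, hq, rfl⟩ := List.mem_map.1 hp
              have h1 := hok.2 q hq
              simp only [List.length_cons] at h1 ⊢
              omega
        · rw [matchWt_cons, hed, min_eq_left hc]
          have hsh : matchWt (fun a b => δdel a + δins b - δ a b) (a :: A) (b :: B)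
              (M.map fun p => (p.1 + 1, p.2 + 1)) =
              matchWt (fun a b => δdel a + δins b - δ a b) A B M := by
            unfold matchWt
            rw [List.map_map]
            congr 1
          rw [hsh, hw]
          simp only [List.map_cons, List.sum_cons, List.getD_cons_zero]
          ring
      · rcases le_or_gt (δdel a + ed δ δdel δins A (b :: B))
            (δins b + ed δ δdel δins (a :: A) B) with hc2 | hc2
        · -- deletion branch
          obtain ⟨M, hok, hw⟩ := exists_match δ δdel δins A (b :: B)
          rw [matchOK_iff] at hok
          refine ⟨M.map (fun p => (p.1 + 1, p.2)), ?_, ?_⟩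
          · rw [matchOK_iff]
            constructor
            · rw [List.pairwise_map]
              exact hok.1.imp fun h => ⟨by simpa using h.1, h.2⟩
            · intro p hp
              obtain ⟨q, hq, rfl⟩ := List.mem_map.1 hp
              have h1 := hok.2 q hq
              simp only [List.length_cons] at h1 ⊢
              omega
          · have hsh : matchWt (fun a b => δdel a + δins b - δ a b) (a :: A) (b :: B)
                (M.map fun p => (p.1 + 1, p.2)) =
                matchWt (fun a b => δdel a + δins b - δ a b) A (b :: B) M := by
              unfold matchWt
              rw [List.map_map]
              congr 1
            rw [hsh, hw, hed, min_eq_right (le_of_lt hc), min_eq_left hc2]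
            simp only [List.map_cons, List.sum_cons]
            ring
        · -- insertion branch
          obtain ⟨M, hok, hw⟩ := exists_match δ δdel δins (a :: A) B
          rw [matchOK_iff] at hok
          refine ⟨M.map (fun p => (p.1, p.2 + 1)), ?_, ?_⟩
          · rw [matchOK_iff]
            constructor
            · rw [List.pairwise_map]
              exact hok.1.imp fun h => ⟨h.1, by simpa using h.2⟩
            · intro p hp
              obtain ⟨q, hq, rfl⟩ := List.mem_map.1 hp
              have h1 := hok.2 q hq
              simp only [List.length_cons] at h1 ⊢
              omega
          · have hsh : matchWt (fun a b => δdel a + δins b - δ a b) (a :: A) (b :: B)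
                (M.map fun p => (p.1, p.2 + 1)) =
                matchWt (fun a b => δdel a + δins b - δ a b) (a :: A) B M := by
              unfold matchWt
              rw [List.map_map]
              congr 1
            rw [hsh, hw, hed, min_eq_right (le_of_lt hc), min_eq_right (le_of_lt hc2)]
            simp only [List.map_cons, List.sum_cons]
            ring
termination_by A B => A.length + B.length

/-- `sim(A,B) = Σᵢ δ(aᵢ,ε) + Σⱼ δ(ε,bⱼ) - ed(A,B)` where
`η(a,b) = δ(a,ε) + δ(ε,b) - δ(a,b)`. -/
theorem stmt0 (δ : ℤ → ℤ → ℤ) (δdel δins : ℤ → ℤ)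
    (hsub : ∀ a b, δ a b ≤ δdel a + δins b)
    (hdiag : ∀ a, δ a a = 0)
    (hδnn : ∀ a b, 0 ≤ δ a b) (hdelnn : ∀ a, 0 ≤ δdel a) (hinsnn : ∀ b, 0 ≤ δins b)
    (A B : List ℤ) (S : ℤ)
    (hS : IsGreatest (simSet (fun a b => δdel a + δins b - δ a b) A B) S) :
    S = (A.map δdel).sum + (B.map δins).sum - ed δ δdel δins A B := by
  obtain ⟨⟨M, hok, hSw⟩, hub⟩ := hS
  have h1 := ed_le_sub δ δdel δins A B M hok
  obtain ⟨M', hok', hw'⟩ := exists_match δ δdel δins A B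
  have h2 : (A.map δdel).sum + (B.map δins).sum - ed δ δdel δins A B ≤ S :=
    hub ⟨M', hok', hw'.symm⟩
  rw [hSw]
  linarith [h1, h2, hSw ▸ h2]

end Stmt0
end

section
/- Forest similarity is superadditive over bi-order splits: for all forests F, F', indices x ≤ z ≤ y in [1, 2|F|+1] and x' ≤ z' ≤ y' in [1, 2|F'|+1], sim(F[x..y), F'[x'..y')) ≥ sim(F[x..z), F'[x'..z')) + sim(F[z..y), F'[z'..y')). -/
namespace Stmt5

/-- An ordered forest on node set `Fin n`, encoded by its bi-order traversal:
`l v` is the (1-based) position of the first occurrence of `v`, and `r v` is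
one plus the position of the second occurrence. The positions `1, …, 2n` are
occupied by exactly one occurrence each, and occurrence intervals are
well-nested. -/
structure BiForest (n : ℕ) where
  l : Fin n → ℕ
  r : Fin n → ℕ
  one_le_l : ∀ v, 1 ≤ l v
  l_add_two_le_r : ∀ v, l v + 2 ≤ r v
  r_le : ∀ v, r v ≤ 2 * n + 1
  occ_inj : Function.Injective
    (Sum.elim (fun v => l v) (fun v => r v - 1) : Fin n ⊕ Fin n → ℕ)
  nested : ∀ u v : Fin n,
    r u ≤ l v ∨ r v ≤ l u ∨ (l u ≤ l v ∧ r v ≤ r u) ∨ (l v ≤ l u ∧ r u ≤ r v)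

variable {n n' : ℕ}

/-- Membership of a node `v` in the subforest `F[x..y)`: both bi-order
occurrences of `v` lie in positions `x, …, y-1`. -/
def BiForest.mem (F : BiForest n) (x y : ℕ) (v : Fin n) : Prop :=
  x ≤ F.l v ∧ F.r v ≤ y

/-- Two matched pairs are compatible if they consist of distinct nodes and
preserve the ancestor relations and the left-to-right (pre-order) order in
both directions; equivalently, the `l`-order and the `r`-order are preserved. -/
def Compat (F : BiForest n) (F' : BiForest n') (p q : Fin n × Fin n') : Prop :=
  p.1 ≠ q.1 ∧ p.2 ≠ q.2 ∧
  (F.l p.1 < F.l q.1 ↔ F'.l p.2 < F'.l q.2) ∧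
  (F.r p.1 < F.r q.1 ↔ F'.r p.2 < F'.r q.2)

/-- A valid similarity mapping between `F` and `F'`. -/
def IsMapping (F : BiForest n) (F' : BiForest n') (M : List (Fin n × Fin n')) : Prop :=
  M.Pairwise (Compat F F')

/-- Total weight of a mapping under the weight function `η`. -/
def wt (η : Fin n → Fin n' → ℤ) (M : List (Fin n × Fin n')) : ℤ :=
  (M.map (fun p => η p.1 p.2)).sum

/-- The set of achievable mapping weights, where matched nodes are restricted
by the predicates `P` (on `F`) and `P'` (on `F'`); its greatest element is the
similarity of the corresponding subforests. -/
def simSetP (F : BiForest n) (F' : BiForest n') (η : Fin n → Fin n' → ℤ)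
    (P : Fin n → Prop) (P' : Fin n' → Prop) : Set ℤ :=
  {s | ∃ M, IsMapping F F' M ∧ (∀ p ∈ M, P p.1 ∧ P' p.2) ∧ s = wt η M}

/-- The set of achievable mapping weights between the subforests `F[x..y)` and
`F'[x'..y')`; its greatest element is `sim(F[x..y), F'[x'..y'))`. -/
def simSet (F : BiForest n) (F' : BiForest n') (η : Fin n → Fin n' → ℤ)
    (x y x' y' : ℕ) : Set ℤ :=
  simSetP F F' η (F.mem x y) (F'.mem x' y')

/-- forest similarity is superadditive over bi-order splits:
`sim(F[x..y), F'[x'..y')) ≥ sim(F[x..z), F'[x'..z')) + sim(F[z..y), F'[z'..y'))`. -/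
theorem stmt5 (F : BiForest n) (F' : BiForest n') (η : Fin n → Fin n' → ℤ)
    (x z y x' z' y' : ℕ)
    (hx : 1 ≤ x) (hxz : x ≤ z) (hzy : z ≤ y) (hy : y ≤ 2 * n + 1)
    (hx' : 1 ≤ x') (hxz' : x' ≤ z') (hzy' : z' ≤ y') (hy' : y' ≤ 2 * n' + 1)
    (S S₁ S₂ : ℤ)
    (hS : IsGreatest (simSet F F' η x y x' y') S)
    (hS₁ : IsGreatest (simSet F F' η x z x' z') S₁)
    (hS₂ : IsGreatest (simSet F F' η z y z' y') S₂) :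
    S₁ + S₂ ≤ S := by
  obtain ⟨⟨M₁, hm₁, hp₁, rfl⟩, -⟩ := hS₁
  obtain ⟨⟨M₂, hm₂, hp₂, rfl⟩, -⟩ := hS₂
  apply hS.2
  refine ⟨M₁ ++ M₂, ?_, ?_, ?_⟩
  · rw [IsMapping, List.pairwise_append]
    refine ⟨hm₁, hm₂, fun p hp q hq => ?_⟩
    obtain ⟨⟨_, hpr⟩, ⟨_, hpr'⟩⟩ := hp₁ p hp
    obtain ⟨⟨hql, _⟩, ⟨hql', _⟩⟩ := hp₂ q hq
    have h1 : F.l p.1 < F.l q.1 :=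
      lt_of_lt_of_le (by have := F.l_add_two_le_r p.1; omega) (le_trans hpr hql)
    have h2 : F.r p.1 < F.r q.1 :=
      lt_of_le_of_lt (le_trans hpr hql) (by have := F.l_add_two_le_r q.1; omega)
    have h1' : F'.l p.2 < F'.l q.2 :=
      lt_of_lt_of_le (by have := F'.l_add_two_le_r p.2; omega) (le_trans hpr' hql')
    have h2' : F'.r p.2 < F'.r q.2 :=
      lt_of_le_of_lt (le_trans hpr' hql') (by have := F'.l_add_two_le_r q.2; omega)
    exact ⟨fun h => absurd (h ▸ h1) (lt_irrefl _),
      fun h => absurd (h ▸ h1') (lt_irrefl _),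
      iff_of_true h1 h1', iff_of_true h2 h2'⟩
  · intro p hp
    rcases List.mem_append.mp hp with h | h
    · obtain ⟨⟨a, b⟩, ⟨c, d⟩⟩ := hp₁ p h
      exact ⟨⟨a, le_trans b hzy⟩, ⟨c, le_trans d hzy'⟩⟩
    · obtain ⟨⟨a, b⟩, ⟨c, d⟩⟩ := hp₂ p h
      exact ⟨⟨le_trans hxz a, b⟩, ⟨le_trans hxz' c, d⟩⟩
  · simp [wt]

end Stmt5
end

section
/- Anchor transformation: let (z,z') be an anchor of sim(F[x..y), F'[x'..y')) and suppose B is an anchor set of sim(F[z..y), F'[z'..y')). Then (i) for any anchor set A of sim(F[x..y), F'[x'..y')) containing (z,z'), the sets A and B are paired anchor sets of sim(F[x..y), F'[x'..y')); and (ii) B is itself an anchor set of sim(F[x..y), F'[x'..y')). -/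
namespace Stmt7

/-- An ordered forest on node set `Fin n`, encoded by its bi-order traversal:
`l v` is the (1-based) position of the first occurrence of `v`, and `r v` is
one plus the position of the second occurrence. The positions `1, …, 2n` are
occupied by exactly one occurrence each, and occurrence intervals are
well-nested. -/
structure BiForest (n : ℕ) where
  l : Fin n → ℕ
  r : Fin n → ℕ
  one_le_l : ∀ v, 1 ≤ l v
  l_add_two_le_r : ∀ v, l v + 2 ≤ r v
  r_le : ∀ v, r v ≤ 2 * n + 1
  occ_inj : Function.Injective
    (Sum.elim (fun v => l v) (fun v => r v - 1) : Fin n ⊕ Fin n → ℕ)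
  nested : ∀ u v : Fin n,
    r u ≤ l v ∨ r v ≤ l u ∨ (l u ≤ l v ∧ r v ≤ r u) ∨ (l v ≤ l u ∧ r u ≤ r v)

variable {n n' : ℕ}

/-- Membership of a node `v` in the subforest `F[x..y)`: both bi-order
occurrences of `v` lie in positions `x, …, y-1`. -/
def BiForest.mem (F : BiForest n) (x y : ℕ) (v : Fin n) : Prop :=
  x ≤ F.l v ∧ F.r v ≤ y

/-- Two matched pairs are compatible if they consist of distinct nodes and
preserve the ancestor relations and the left-to-right (pre-order) order in
both directions; equivalently, the `l`-order and the `r`-order are preserved. -/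
def Compat (F : BiForest n) (F' : BiForest n') (p q : Fin n × Fin n') : Prop :=
  p.1 ≠ q.1 ∧ p.2 ≠ q.2 ∧
  (F.l p.1 < F.l q.1 ↔ F'.l p.2 < F'.l q.2) ∧
  (F.r p.1 < F.r q.1 ↔ F'.r p.2 < F'.r q.2)

/-- A valid similarity mapping between `F` and `F'`. -/
def IsMapping (F : BiForest n) (F' : BiForest n') (M : List (Fin n × Fin n')) : Prop :=
  M.Pairwise (Compat F F')

/-- Total weight of a mapping under the weight function `η`. -/
def wt (η : Fin n → Fin n' → ℤ) (M : List (Fin n × Fin n')) : ℤ :=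
  (M.map (fun p => η p.1 p.2)).sum

/-- The set of achievable mapping weights, where matched nodes are restricted
by the predicates `P` (on `F`) and `P'` (on `F'`); its greatest element is the
similarity of the corresponding subforests. -/
def simSetP (F : BiForest n) (F' : BiForest n') (η : Fin n → Fin n' → ℤ)
    (P : Fin n → Prop) (P' : Fin n' → Prop) : Set ℤ :=
  {s | ∃ M, IsMapping F F' M ∧ (∀ p ∈ M, P p.1 ∧ P' p.2) ∧ s = wt η M}

/-- The set of achievable mapping weights between the subforests `F[x..y)` and
`F'[x'..y')`; its greatest element is `sim(F[x..y), F'[x'..y'))`. -/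
def simSet (F : BiForest n) (F' : BiForest n') (η : Fin n → Fin n' → ℤ)
    (x y x' y' : ℕ) : Set ℤ :=
  simSetP F F' η (F.mem x y) (F'.mem x' y')

/-- `(z, z')` is an anchor of `sim(F[x..y), F'[x'..y'))`: the similarity
splits additively at `(z, z')`. -/
def IsAnchor (F : BiForest n) (F' : BiForest n') (η : Fin n → Fin n' → ℤ)
    (x y x' y' z z' : ℕ) : Prop :=
  x ≤ z ∧ z ≤ y ∧ x' ≤ z' ∧ z' ≤ y' ∧
  ∃ S S₁ S₂ : ℤ,
    IsGreatest (simSet F F' η x y x' y') S ∧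
    IsGreatest (simSet F F' η x z x' z') S₁ ∧
    IsGreatest (simSet F F' η z y z' y') S₂ ∧
    S = S₁ + S₂

/-- `B` is an anchor set of `sim(F[x..y), F'[x'..y'))`: it contains an anchor. -/
def IsAnchorSet (F : BiForest n) (F' : BiForest n') (η : Fin n → Fin n' → ℤ)
    (x y x' y' : ℕ) (B : Set (ℕ × ℕ)) : Prop :=
  ∃ p ∈ B, IsAnchor F F' η x y x' y' p.1 p.2

/-- `B, B'` are paired anchor sets of `sim(F[x..y), F'[x'..y'))`: they contain
paired anchors realizing a three-way additive split of the similarity. -/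
def ArePairedAnchorSets (F : BiForest n) (F' : BiForest n') (η : Fin n → Fin n' → ℤ)
    (x y x' y' : ℕ) (B B' : Set (ℕ × ℕ)) : Prop :=
  ∃ p ∈ B, ∃ q ∈ B',
    x ≤ p.1 ∧ p.1 ≤ q.1 ∧ q.1 ≤ y ∧ x' ≤ p.2 ∧ p.2 ≤ q.2 ∧ q.2 ≤ y' ∧
    ∃ S S₁ S₂ S₃ : ℤ,
      IsGreatest (simSet F F' η x y x' y') S ∧
      IsGreatest (simSet F F' η x p.1 x' p.2) S₁ ∧
      IsGreatest (simSet F F' η p.1 q.1 p.2 q.2) S₂ ∧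
      IsGreatest (simSet F F' η q.1 y q.2 y') S₃ ∧
      S = S₁ + S₂ + S₃

lemma combine (F : BiForest n) (F' : BiForest n') (η : Fin n → Fin n' → ℤ)
    {x m y x' m' y' : ℕ} (hxm : x ≤ m) (hx'm' : x' ≤ m') (hm : m ≤ y) (hm' : m' ≤ y')
    {a b : ℤ} (ha : a ∈ simSet F F' η x m x' m') (hb : b ∈ simSet F F' η m y m' y') :
    a + b ∈ simSet F F' η x y x' y' := by
  obtain ⟨M₁, hM₁, hP₁, rfl⟩ := ha
  obtain ⟨M₂, hM₂, hP₂, rfl⟩ := hb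
  refine ⟨M₁ ++ M₂, ?_, ?_, ?_⟩
  · rw [IsMapping, List.pairwise_append]
    refine ⟨hM₁, hM₂, fun p hp q hq => ?_⟩
    obtain ⟨⟨hpl, hpr⟩, hpl', hpr'⟩ := hP₁ p hp
    obtain ⟨⟨hql, hqr⟩, hql', hqr'⟩ := hP₂ q hq
    have h1 : F.l p.1 < F.l q.1 := by
      have := F.l_add_two_le_r p.1; omega
    have h2 : F.r p.1 < F.r q.1 := by
      have := F.l_add_two_le_r q.1; omega
    have h1' : F'.l p.2 < F'.l q.2 := by
      have := F'.l_add_two_le_r p.2; omega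
    have h2' : F'.r p.2 < F'.r q.2 := by
      have := F'.l_add_two_le_r q.2; omega
    refine ⟨fun h => by rw [h] at h1; omega, fun h => by rw [h] at h1'; omega,
      by simp [h1, h1'], by simp [h2, h2']⟩
  · intro p hp
    rcases List.mem_append.mp hp with h | h
    · obtain ⟨⟨h1, h2⟩, h3, h4⟩ := hP₁ p h
      exact ⟨⟨h1, h2.trans hm⟩, h3, h4.trans hm'⟩
    · obtain ⟨⟨h1, h2⟩, h3, h4⟩ := hP₂ p h
      exact ⟨⟨le_trans (by omega) h1, h2⟩, le_trans (by omega) h3, h4⟩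
  · simp [wt]
/-- anchor transformation: let `(z,z')` be an anchor of
`sim(F[x..y), F'[x'..y'))` and let `B` be an anchor set of
`sim(F[z..y), F'[z'..y'))`. Then (i) for any anchor set `A` of
`sim(F[x..y), F'[x'..y'))` containing `(z,z')`, the sets `A` and `B` are
paired anchor sets of `sim(F[x..y), F'[x'..y'))`; and (ii) `B` is itself an
anchor set of `sim(F[x..y), F'[x'..y'))`. -/
theorem stmt7 (F : BiForest n) (F' : BiForest n') (η : Fin n → Fin n' → ℤ)
    (x y x' y' z z' : ℕ) (B : Set (ℕ × ℕ))
    (hanch : IsAnchor F F' η x y x' y' z z')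
    (hB : IsAnchorSet F F' η z y z' y' B) :
    (∀ A : Set (ℕ × ℕ), IsAnchorSet F F' η x y x' y' A → (z, z') ∈ A →
        ArePairedAnchorSets F F' η x y x' y' A B) ∧
    IsAnchorSet F F' η x y x' y' B := by
  obtain ⟨hxz, hzy, hx'z', hz'y', S, S₁, S₂, hS, hS₁, hS₂, hsum⟩ := hanch
  obtain ⟨q, hqB, hzw, hwy, hz'w', hw'y', S₂', T₁, T₂, hS₂', hT₁, hT₂, hsum'⟩ := hB
  have hEq : S₂' = S₂ := hS₂'.unique hS₂
  have hkey : IsGreatest (simSet F F' η x q.1 x' q.2) (S₁ + T₁) := by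
    constructor
    · exact combine F F' η hxz hx'z' hzw hz'w' hS₁.1 hT₁.1
    · intro s hs
      have h2 : s + T₂ ∈ simSet F F' η x y x' y' :=
        combine F F' η (hxz.trans hzw) (hx'z'.trans hz'w') hwy hw'y' hs hT₂.1
      have := hS.2 h2
      omega
  have hS3 : S = S₁ + T₁ + T₂ := by omega
  constructor
  · intro A hA hzA
    exact ⟨(z, z'), hzA, q, hqB, hxz, hzw, hwy, hx'z', hz'w', hw'y',
      S, S₁, T₁, T₂, hS, hS₁, hT₁, hT₂, hS3⟩
  · exact ⟨q, hqB, hxz.trans hzw, hwy, hx'z'.trans hz'w', hw'y',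
      S, S₁ + T₁, T₂, hS, hkey, hT₂, by omega⟩

end Stmt7
end

section
/- Corner anchor lemma: suppose for subforests F[x..y), F'[x'..y') there exist nodes v ∈ F[x..y), v' ∈ F'[x'..y') such that sim(F[x..y), F'[x'..y')) = sim(F[x..l(v)) + F[l(v)..y), F'[x'..l(v')) + F'[l(v')..y')). Then the L-shaped set ({l(v)} × [1, l(v')]) ∪ ([1, l(v)] × {l(v')}) is an anchor set of sim(F[x..y), F'[x'..y')). -/
namespace Stmt8

/-- An ordered forest on node set `Fin n`, encoded by its bi-order traversal:
`l v` is the (1-based) position of the first occurrence of `v`, and `r v` is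
one plus the position of the second occurrence. The positions `1, …, 2n` are
occupied by exactly one occurrence each, and occurrence intervals are
well-nested. -/
structure BiForest (n : ℕ) where
  l : Fin n → ℕ
  r : Fin n → ℕ
  one_le_l : ∀ v, 1 ≤ l v
  l_add_two_le_r : ∀ v, l v + 2 ≤ r v
  r_le : ∀ v, r v ≤ 2 * n + 1
  occ_inj : Function.Injective
    (Sum.elim (fun v => l v) (fun v => r v - 1) : Fin n ⊕ Fin n → ℕ)
  nested : ∀ u v : Fin n,
    r u ≤ l v ∨ r v ≤ l u ∨ (l u ≤ l v ∧ r v ≤ r u) ∨ (l v ≤ l u ∧ r u ≤ r v)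

variable {n n' : ℕ}

/-- Membership of a node `v` in the subforest `F[x..y)`: both bi-order
occurrences of `v` lie in positions `x, …, y-1`. -/
def BiForest.mem (F : BiForest n) (x y : ℕ) (v : Fin n) : Prop :=
  x ≤ F.l v ∧ F.r v ≤ y

/-- Two matched pairs are compatible if they consist of distinct nodes and
preserve the ancestor relations and the left-to-right (pre-order) order in
both directions; equivalently, the `l`-order and the `r`-order are preserved. -/
def Compat (F : BiForest n) (F' : BiForest n') (p q : Fin n × Fin n') : Prop :=
  p.1 ≠ q.1 ∧ p.2 ≠ q.2 ∧
  (F.l p.1 < F.l q.1 ↔ F'.l p.2 < F'.l q.2) ∧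
  (F.r p.1 < F.r q.1 ↔ F'.r p.2 < F'.r q.2)

/-- A valid similarity mapping between `F` and `F'`. -/
def IsMapping (F : BiForest n) (F' : BiForest n') (M : List (Fin n × Fin n')) : Prop :=
  M.Pairwise (Compat F F')

/-- Total weight of a mapping under the weight function `η`. -/
def wt (η : Fin n → Fin n' → ℤ) (M : List (Fin n × Fin n')) : ℤ :=
  (M.map (fun p => η p.1 p.2)).sum

/-- The set of achievable mapping weights, where matched nodes are restricted
by the predicates `P` (on `F`) and `P'` (on `F'`); its greatest element is the
similarity of the corresponding subforests. -/
def simSetP (F : BiForest n) (F' : BiForest n') (η : Fin n → Fin n' → ℤ)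
    (P : Fin n → Prop) (P' : Fin n' → Prop) : Set ℤ :=
  {s | ∃ M, IsMapping F F' M ∧ (∀ p ∈ M, P p.1 ∧ P' p.2) ∧ s = wt η M}

/-- The set of achievable mapping weights between the subforests `F[x..y)` and
`F'[x'..y')`; its greatest element is `sim(F[x..y), F'[x'..y'))`. -/
def simSet (F : BiForest n) (F' : BiForest n') (η : Fin n → Fin n' → ℤ)
    (x y x' y' : ℕ) : Set ℤ :=
  simSetP F F' η (F.mem x y) (F'.mem x' y')

/-- `(z, z')` is an anchor of `sim(F[x..y), F'[x'..y'))`: the similarity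
splits additively at `(z, z')`. -/
def IsAnchor (F : BiForest n) (F' : BiForest n') (η : Fin n → Fin n' → ℤ)
    (x y x' y' z z' : ℕ) : Prop :=
  x ≤ z ∧ z ≤ y ∧ x' ≤ z' ∧ z' ≤ y' ∧
  ∃ S S₁ S₂ : ℤ,
    IsGreatest (simSet F F' η x y x' y') S ∧
    IsGreatest (simSet F F' η x z x' z') S₁ ∧
    IsGreatest (simSet F F' η z y z' y') S₂ ∧
    S = S₁ + S₂

/-- `B` is an anchor set of `sim(F[x..y), F'[x'..y'))`: it contains an anchor. -/
def IsAnchorSet (F : BiForest n) (F' : BiForest n') (η : Fin n → Fin n' → ℤ)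
    (x y x' y' : ℕ) (B : Set (ℕ × ℕ)) : Prop :=
  ∃ p ∈ B, IsAnchor F F' η x y x' y' p.1 p.2

/-- `B, B'` are paired anchor sets of `sim(F[x..y), F'[x'..y'))`: they contain
paired anchors realizing a three-way additive split of the similarity. -/
def ArePairedAnchorSets (F : BiForest n) (F' : BiForest n') (η : Fin n → Fin n' → ℤ)
    (x y x' y' : ℕ) (B B' : Set (ℕ × ℕ)) : Prop :=
  ∃ p ∈ B, ∃ q ∈ B',
    x ≤ p.1 ∧ p.1 ≤ q.1 ∧ q.1 ≤ y ∧ x' ≤ p.2 ∧ p.2 ≤ q.2 ∧ q.2 ≤ y' ∧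
    ∃ S S₁ S₂ S₃ : ℤ,
      IsGreatest (simSet F F' η x y x' y') S ∧
      IsGreatest (simSet F F' η x p.1 x' p.2) S₁ ∧
      IsGreatest (simSet F F' η p.1 q.1 p.2 q.2) S₂ ∧
      IsGreatest (simSet F F' η q.1 y q.2 y') S₃ ∧
      S = S₁ + S₂ + S₃

/-! ### Auxiliary lemmas -/

lemma l_injective (F : BiForest n) : Function.Injective F.l := by
  intro a b h
  have : (Sum.inl a : Fin n ⊕ Fin n) = Sum.inl b :=
    F.occ_inj (by simp only [Sum.elim_inl]; exact h)
  exact Sum.inl.inj this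

lemma r_injective (F : BiForest n) : Function.Injective F.r := by
  intro a b h
  have h2 := F.l_add_two_le_r a
  have h3 := F.l_add_two_le_r b
  have : (Sum.inr a : Fin n ⊕ Fin n) = Sum.inr b :=
    F.occ_inj (by simp only [Sum.elim_inr]; omega)
  exact Sum.inr.inj this

lemma compat_symm (F : BiForest n) (F' : BiForest n') :
    Symmetric (Compat F F') := by
  rintro p q ⟨h1, h2, h3, h4⟩
  have hl : F.l p.1 ≠ F.l q.1 := fun he => h1 (l_injective F he)
  have hl' : F'.l p.2 ≠ F'.l q.2 := fun he => h2 (l_injective F' he)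
  have hr : F.r p.1 ≠ F.r q.1 := fun he => h1 (r_injective F he)
  have hr' : F'.r p.2 ≠ F'.r q.2 := fun he => h2 (r_injective F' he)
  exact ⟨h1.symm, h2.symm, by omega, by omega⟩

/-- Separation: if both the first and second occurrences of `a` precede those
of `b`, then `a` lies entirely before `b`. -/
lemma sep (F : BiForest n) {a b : Fin n} (h1 : F.l a < F.l b)
    (h2 : F.r a < F.r b) : F.r a ≤ F.l b := by
  have ha := F.l_add_two_le_r a
  have hb := F.l_add_two_le_r b
  rcases F.nested a b with h | h | h | h <;> omega

lemma cross_sep (F : BiForest n) (F' : BiForest n') {q p : Fin n × Fin n'}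
    (hC : Compat F F' q p) {c : ℕ} (h1 : F'.r q.2 ≤ c) (h2 : c ≤ F'.l p.2) :
    F.r q.1 ≤ F.l p.1 := by
  have hq := F'.l_add_two_le_r q.2
  have hp := F'.l_add_two_le_r p.2
  have hl : F.l q.1 < F.l p.1 := hC.2.2.1.mpr (by omega)
  have hr : F.r q.1 < F.r p.1 := hC.2.2.2.mpr (by omega)
  exact sep F hl hr

lemma cross_sep' (F : BiForest n) (F' : BiForest n') {q p : Fin n × Fin n'}
    (hC : Compat F F' q p) {c : ℕ} (h1 : F.r q.1 ≤ c) (h2 : c ≤ F.l p.1) :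
    F'.r q.2 ≤ F'.l p.2 := by
  have hq := F.l_add_two_le_r q.1
  have hp := F.l_add_two_le_r p.1
  have hl : F'.l q.2 < F'.l p.2 := hC.2.2.1.mp (by omega)
  have hr : F'.r q.2 < F'.r p.2 := hC.2.2.2.mp (by omega)
  exact sep F' hl hr

lemma wt_nil (η : Fin n → Fin n' → ℤ) : wt η ([] : List (Fin n × Fin n')) = 0 := rfl

lemma zero_mem_simSetP (F : BiForest n) (F' : BiForest n') (η : Fin n → Fin n' → ℤ)
    (P : Fin n → Prop) (P' : Fin n' → Prop) :
    (0 : ℤ) ∈ simSetP F F' η P P' :=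
  ⟨[], List.Pairwise.nil, by simp, rfl⟩

lemma wt_append (η : Fin n → Fin n' → ℤ) (M₁ M₂ : List (Fin n × Fin n')) :
    wt η (M₁ ++ M₂) = wt η M₁ + wt η M₂ := by
  simp [wt]

lemma wt_filter (η : Fin n → Fin n' → ℤ) (f : Fin n × Fin n' → Bool)
    (M : List (Fin n × Fin n')) :
    wt η (M.filter f) + wt η (M.filter fun p => !f p) = wt η M := by
  induction M with
  | nil => simp [wt]
  | cons a t ih =>
    cases hfa : f a <;> simp [wt, List.filter_cons, hfa] at ih ⊢ <;> omega

/-- The core splitting lemma: if the optimal similarity is realized by a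
mapping in which every matched pair lies entirely in the lower block
`[x..z) × [x'..z')` or entirely in the upper block `[z..y) × [z'..y')`,
then `(z, z')` is an anchor. -/
lemma isAnchor_core (F : BiForest n) (F' : BiForest n') (η : Fin n → Fin n' → ℤ)
    (x y x' y' z z' : ℕ)
    (hxz : x ≤ z) (hzy : z ≤ y) (hx'z' : x' ≤ z') (hz'y' : z' ≤ y')
    (S : ℤ) (hS : IsGreatest (simSet F F' η x y x' y') S)
    (M : List (Fin n × Fin n')) (hM : IsMapping F F' M) (hwt : S = wt η M)
    (hclass : ∀ p ∈ M,
      (F.mem x z p.1 ∧ F'.mem x' z' p.2) ∨ (F.mem z y p.1 ∧ F'.mem z' y' p.2)) :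
    IsAnchor F F' η x y x' y' z z' := by
  have hsub1 : simSet F F' η x z x' z' ⊆ simSet F F' η x y x' y' := by
    rintro s ⟨N, h1, h2, h3⟩
    exact ⟨N, h1, fun p hp =>
      ⟨⟨(h2 p hp).1.1, le_trans (h2 p hp).1.2 hzy⟩,
       ⟨(h2 p hp).2.1, le_trans (h2 p hp).2.2 hz'y'⟩⟩, h3⟩
  have hsub2 : simSet F F' η z y z' y' ⊆ simSet F F' η x y x' y' := by
    rintro s ⟨N, h1, h2, h3⟩
    exact ⟨N, h1, fun p hp =>
      ⟨⟨le_trans hxz (h2 p hp).1.1, (h2 p hp).1.2⟩,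
       ⟨le_trans hx'z' (h2 p hp).2.1, (h2 p hp).2.2⟩⟩, h3⟩
  obtain ⟨S₁, hS₁mem, hS₁ub⟩ := Int.exists_greatest_of_bdd
    (P := fun s => s ∈ simSet F F' η x z x' z')
    ⟨S, fun s hs => hS.2 (hsub1 hs)⟩ ⟨0, zero_mem_simSetP _ _ _ _ _⟩
  obtain ⟨S₂, hS₂mem, hS₂ub⟩ := Int.exists_greatest_of_bdd
    (P := fun s => s ∈ simSet F F' η z y z' y')
    ⟨S, fun s hs => hS.2 (hsub2 hs)⟩ ⟨0, zero_mem_simSetP _ _ _ _ _⟩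
  refine ⟨hxz, hzy, hx'z', hz'y', S, S₁, S₂, hS, ⟨hS₁mem, hS₁ub⟩, ⟨hS₂mem, hS₂ub⟩, ?_⟩
  -- first inequality: S ≤ S₁ + S₂, by splitting M
  have hle : S ≤ S₁ + S₂ := by
    set f : Fin n × Fin n' → Bool := fun p => decide (F.r p.1 ≤ z) with hf
    have hM₁ : wt η (M.filter f) ∈ simSet F F' η x z x' z' := by
      refine ⟨M.filter f, List.Pairwise.sublist List.filter_sublist hM, ?_, rfl⟩
      intro p hp
      rw [List.mem_filter] at hp
      have hrz : F.r p.1 ≤ z := by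
        have := hp.2; simp [hf] at this; exact this
      rcases hclass p hp.1 with h | h
      · exact h
      · exact absurd hrz (by have := F.l_add_two_le_r p.1; have := h.1.1; omega)
    have hM₂ : wt η (M.filter fun p => !f p) ∈ simSet F F' η z y z' y' := by
      refine ⟨M.filter fun p => !f p, List.Pairwise.sublist List.filter_sublist hM, ?_, rfl⟩
      intro p hp
      rw [List.mem_filter] at hp
      have hrz : z < F.r p.1 := by
        have := hp.2; simp [hf] at this; exact this
      rcases hclass p hp.1 with h | h
      · exact absurd h.1.2 (by omega)
      · exact h
    calc S = wt η (M.filter f) + wt η (M.filter fun p => !f p) :=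
            (hwt.trans (wt_filter η f M).symm)
      _ ≤ S₁ + S₂ := add_le_add (hS₁ub _ hM₁) (hS₂ub _ hM₂)
  -- reverse inequality: S₁ + S₂ ≤ S, by concatenating optimal mappings
  have hge : S₁ + S₂ ≤ S := by
    obtain ⟨M₁, hM₁map, hM₁mem, hM₁wt⟩ := hS₁mem
    obtain ⟨M₂, hM₂map, hM₂mem, hM₂wt⟩ := hS₂mem
    have hcat : wt η (M₁ ++ M₂) ∈ simSet F F' η x y x' y' := by
      refine ⟨M₁ ++ M₂, ?_, ?_, rfl⟩
      · rw [IsMapping, List.pairwise_append]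
        refine ⟨hM₁map, hM₂map, ?_⟩
        intro p hp q hq
        obtain ⟨⟨hpl1, hpl2⟩, ⟨hpl1', hpl2'⟩⟩ := hM₁mem p hp
        obtain ⟨⟨hql1, hql2⟩, ⟨hql1', hql2'⟩⟩ := hM₂mem q hq
        have hp1 := F.l_add_two_le_r p.1
        have hq1 := F.l_add_two_le_r q.1
        have hp2 := F'.l_add_two_le_r p.2
        have hq2 := F'.l_add_two_le_r q.2
        refine ⟨?_, ?_, by constructor <;> intro <;> omega,
          by constructor <;> intro <;> omega⟩
        · intro he
          have : F.l p.1 = F.l q.1 := by rw [he]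
          omega
        · intro he
          have : F'.l p.2 = F'.l q.2 := by rw [he]
          omega
      · intro p hp
        rcases List.mem_append.mp hp with h | h
        · obtain ⟨⟨a1, a2⟩, ⟨b1, b2⟩⟩ := hM₁mem p h
          exact ⟨⟨a1, le_trans a2 hzy⟩, ⟨b1, le_trans b2 hz'y'⟩⟩
        · obtain ⟨⟨a1, a2⟩, ⟨b1, b2⟩⟩ := hM₂mem p h
          exact ⟨⟨le_trans hxz a1, a2⟩, ⟨le_trans hx'z' b1, b2⟩⟩
    calc S₁ + S₂ = wt η (M₁ ++ M₂) := by rw [wt_append, hM₁wt, hM₂wt]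
      _ ≤ S := hS.2 hcat
  omega

/-- corner anchor lemma: suppose `v ∈ F[x..y)`, `v' ∈ F'[x'..y')`
and `sim(F[x..y), F'[x'..y')) = sim(F[x..l(v)) + F[l(v)..y), F'[x'..l(v')) + F'[l(v')..y'))`.
Then the L-shaped set `({l(v)} × [1, l(v')]) ∪ ([1, l(v)] × {l(v')})` is an
anchor set of `sim(F[x..y), F'[x'..y'))`. -/
theorem stmt8 (F : BiForest n) (F' : BiForest n') (η : Fin n → Fin n' → ℤ)
    (x y x' y' : ℕ) (v : Fin n) (v' : Fin n')
    (hv : F.mem x y v) (hv' : F'.mem x' y' v')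
    (S : ℤ)
    (hS : IsGreatest (simSet F F' η x y x' y') S)
    (hSsplit : IsGreatest
      (simSetP F F' η
        (fun u => F.mem x (F.l v) u ∨ F.mem (F.l v) y u)
        (fun u' => F'.mem x' (F'.l v') u' ∨ F'.mem (F'.l v') y' u')) S) :
    IsAnchorSet F F' η x y x' y'
      {p : ℕ × ℕ |
        (p.1 = F.l v ∧ 1 ≤ p.2 ∧ p.2 ≤ F'.l v') ∨
        (1 ≤ p.1 ∧ p.1 ≤ F.l v ∧ p.2 = F'.l v')} := by
  classical
  obtain ⟨M, hMmap, hMP, hMwt⟩ := hSsplit.1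
  set a := F.l v with ha
  set a' := F'.l v' with ha'
  have hva := F.l_add_two_le_r v
  have hva' := F'.l_add_two_le_r v'
  have hay : a ≤ y := by have := hv.2; omega
  have hay' : a' ≤ y' := by have := hv'.2; omega
  have hforall := (haveI : Std.Symm (Compat F F') := ⟨fun a b h => compat_symm F F' h⟩; hMmap.forall)
  by_cases hLR : ∃ p ∈ M, F.mem x a p.1 ∧ F'.mem a' y' p.2
  · -- there is a (left, right) pair; anchor at (z, a') with z minimal such l
    set T : Set ℕ :=
      {k | ∃ p ∈ M, (F.mem x a p.1 ∧ F'.mem a' y' p.2) ∧ F.l p.1 = k} with hT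
    have hTne : T.Nonempty := by
      obtain ⟨p, hp, hpc⟩ := hLR
      exact ⟨F.l p.1, p, hp, hpc, rfl⟩
    obtain ⟨p₀, hp₀M, hp₀c, hp₀z⟩ := Nat.sInf_mem hTne
    set z := sInf T with hz
    have hmin : ∀ q ∈ M, (F.mem x a q.1 ∧ F'.mem a' y' q.2) → z ≤ F.l q.1 :=
      fun q hq hqc => Nat.sInf_le ⟨q, hq, hqc, rfl⟩
    have hp₀l := F.l_add_two_le_r p₀.1
    have hzlv : z < a := by have := hp₀c.1.2; omega
    refine ⟨(z, a'), Or.inr ⟨?_, by omega, rfl⟩, ?_⟩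
    · have := F.one_le_l p₀.1; omega
    refine isAnchor_core F F' η x y x' y' z a'
      (by have := hp₀c.1.1; omega) (by omega) hv'.1 hay' S hS M hMmap hMwt ?_
    intro q hq
    obtain ⟨hq1, hq2⟩ := hMP q hq
    rcases hq1 with hL | hR
    · rcases hq2 with hL' | hR'
      · -- (left, left): goes to the lower block
        left
        have hne : q ≠ p₀ := by
          intro he; rw [he] at hL'
          have := hL'.2; have := hp₀c.2.1; have := F'.l_add_two_le_r p₀.2; omega
        have hC := hforall hq hp₀M hne
        have : F.r q.1 ≤ F.l p₀.1 :=
          cross_sep F F' hC (c := a') hL'.2 hp₀c.2.1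
        exact ⟨⟨hL.1, by omega⟩, hL'⟩
      · -- (left, right): goes to the upper block
        right
        exact ⟨⟨hmin q hq ⟨hL, hR'⟩, by have := hL.2; omega⟩, hR'⟩
    · rcases hq2 with hL' | hR'
      · -- (right, left): impossible since a (left, right) pair exists
        exfalso
        have hne : p₀ ≠ q := by
          intro he; rw [he] at hp₀c
          have := hp₀c.1.2; have := hR.1; have := F.l_add_two_le_r q.1; omega
        have hC := hforall hp₀M hq hne
        have h1 : F.l p₀.1 < F.l q.1 := by
          have := hp₀c.1.2; have := hR.1; omega
        have h2 : F'.l p₀.2 < F'.l q.2 := hC.2.2.1.mp h1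
        have := hp₀c.2.1; have := hL'.2; have := F'.l_add_two_le_r q.2; omega
      · -- (right, right): goes to the upper block
        right
        exact ⟨⟨by have := hR.1; omega, hR.2⟩, hR'⟩
  · by_cases hRL : ∃ p ∈ M, F.mem a y p.1 ∧ F'.mem x' a' p.2
    · -- there is a (right, left) pair; anchor at (a, z') with z' minimal such l
      set T : Set ℕ :=
        {k | ∃ p ∈ M, (F.mem a y p.1 ∧ F'.mem x' a' p.2) ∧ F'.l p.2 = k} with hT
      have hTne : T.Nonempty := by
        obtain ⟨p, hp, hpc⟩ := hRL
        exact ⟨F'.l p.2, p, hp, hpc, rfl⟩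
      obtain ⟨p₀, hp₀M, hp₀c, hp₀z⟩ := Nat.sInf_mem hTne
      set z' := sInf T with hz'
      have hmin : ∀ q ∈ M, (F.mem a y q.1 ∧ F'.mem x' a' q.2) → z' ≤ F'.l q.2 :=
        fun q hq hqc => Nat.sInf_le ⟨q, hq, hqc, rfl⟩
      have hp₀l := F'.l_add_two_le_r p₀.2
      have hzlv : z' < a' := by have := hp₀c.2.2; omega
      refine ⟨(a, z'), Or.inl ⟨rfl, ?_, by omega⟩, ?_⟩
      · have := F'.one_le_l p₀.2; omega
      refine isAnchor_core F F' η x y x' y' a z'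
        hv.1 hay (by have := hp₀c.2.1; omega) (by omega) S hS M hMmap hMwt ?_
      intro q hq
      obtain ⟨hq1, hq2⟩ := hMP q hq
      rcases hq1 with hL | hR
      · rcases hq2 with hL' | hR'
        · -- (left, left): lower block
          left
          have hne : q ≠ p₀ := by
            intro he; rw [he] at hL
            have := hL.2; have := hp₀c.1.1; have := F.l_add_two_le_r p₀.1; omega
          have hC := hforall hq hp₀M hne
          have : F'.r q.2 ≤ F'.l p₀.2 :=
            cross_sep' F F' hC (c := a) hL.2 hp₀c.1.1
          exact ⟨hL, ⟨hL'.1, by omega⟩⟩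
        · -- (left, right): excluded
          exact absurd ⟨q, hq, hL, hR'⟩ hLR
      · rcases hq2 with hL' | hR'
        · -- (right, left): upper block
          right
          exact ⟨hR, ⟨hmin q hq ⟨hR, hL'⟩, by have := hL'.2; omega⟩⟩
        · -- (right, right): upper block
          right
          exact ⟨hR, ⟨by have := hR'.1; omega, hR'.2⟩⟩
    · -- no mixed pairs: anchor at (a, a')
      refine ⟨(a, a'), Or.inl ⟨rfl, F'.one_le_l v', le_refl _⟩, ?_⟩
      refine isAnchor_core F F' η x y x' y' a a'
        hv.1 hay hv'.1 hay' S hS M hMmap hMwt ?_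
      intro q hq
      obtain ⟨hq1, hq2⟩ := hMP q hq
      rcases hq1 with hL | hR
      · rcases hq2 with hL' | hR'
        · exact Or.inl ⟨hL, hL'⟩
        · exact absurd ⟨q, hq, hL, hR'⟩ hLR
      · rcases hq2 with hL' | hR'
        · exact absurd ⟨q, hq, hR, hL'⟩ hRL
        · exact Or.inr ⟨hR, hR'⟩

end Stmt8
end

section
/- Align-or-remove dichotomy: let v ∈ F and let P be the set of nodes strictly between the virtual root of F and v on the root-to-v path (excluding both). Then for every pair of subforests F[x..y), F'[x'..y') with sub(v) ⊆ F[x..y), at least one of the following holds: (a) there exists u ∈ P such that sim(F[x..y), F'[x'..y')) aligns sub(u) to some subtree of F'; or (b) sim(F[x..y), F'[x'..y')) = sim(F[x..l(v)) + F[l(v)..y), F'[x'..y')). -/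
namespace Stmt10

/-- An ordered forest on node set `Fin n`, encoded by its bi-order traversal:
`l v` is the (1-based) position of the first occurrence of `v`, and `r v` is
one plus the position of the second occurrence. The positions `1, …, 2n` are
occupied by exactly one occurrence each, and occurrence intervals are
well-nested. -/
structure BiForest (n : ℕ) where
  l : Fin n → ℕ
  r : Fin n → ℕ
  one_le_l : ∀ v, 1 ≤ l v
  l_add_two_le_r : ∀ v, l v + 2 ≤ r v
  r_le : ∀ v, r v ≤ 2 * n + 1
  occ_inj : Function.Injective
    (Sum.elim (fun v => l v) (fun v => r v - 1) : Fin n ⊕ Fin n → ℕ)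
  nested : ∀ u v : Fin n,
    r u ≤ l v ∨ r v ≤ l u ∨ (l u ≤ l v ∧ r v ≤ r u) ∨ (l v ≤ l u ∧ r u ≤ r v)

variable {n n' : ℕ}

/-- Membership of a node `v` in the subforest `F[x..y)`: both bi-order
occurrences of `v` lie in positions `x, …, y-1`. -/
def BiForest.mem (F : BiForest n) (x y : ℕ) (v : Fin n) : Prop :=
  x ≤ F.l v ∧ F.r v ≤ y

/-- Two matched pairs are compatible if they consist of distinct nodes and
preserve the ancestor relations and the left-to-right (pre-order) order in
both directions; equivalently, the `l`-order and the `r`-order are preserved. -/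
def Compat (F : BiForest n) (F' : BiForest n') (p q : Fin n × Fin n') : Prop :=
  p.1 ≠ q.1 ∧ p.2 ≠ q.2 ∧
  (F.l p.1 < F.l q.1 ↔ F'.l p.2 < F'.l q.2) ∧
  (F.r p.1 < F.r q.1 ↔ F'.r p.2 < F'.r q.2)

/-- A valid similarity mapping between `F` and `F'`. -/
def IsMapping (F : BiForest n) (F' : BiForest n') (M : List (Fin n × Fin n')) : Prop :=
  M.Pairwise (Compat F F')

/-- Total weight of a mapping under the weight function `η`. -/
def wt (η : Fin n → Fin n' → ℤ) (M : List (Fin n × Fin n')) : ℤ :=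
  (M.map (fun p => η p.1 p.2)).sum

/-- The set of achievable mapping weights, where matched nodes are restricted
by the predicates `P` (on `F`) and `P'` (on `F'`); its greatest element is the
similarity of the corresponding subforests. -/
def simSetP (F : BiForest n) (F' : BiForest n') (η : Fin n → Fin n' → ℤ)
    (P : Fin n → Prop) (P' : Fin n' → Prop) : Set ℤ :=
  {s | ∃ M, IsMapping F F' M ∧ (∀ p ∈ M, P p.1 ∧ P' p.2) ∧ s = wt η M}

/-- The set of achievable mapping weights between the subforests `F[x..y)` and
`F'[x'..y')`; its greatest element is `sim(F[x..y), F'[x'..y'))`. -/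
def simSet (F : BiForest n) (F' : BiForest n') (η : Fin n → Fin n' → ℤ)
    (x y x' y' : ℕ) : Set ℤ :=
  simSetP F F' η (F.mem x y) (F'.mem x' y')

/-- `u` is a proper ancestor of `v` (a node strictly between the virtual root
and `v` on the root-to-`v` path). -/
def ProperAnc (F : BiForest n) (u v : Fin n) : Prop :=
  F.l u < F.l v ∧ F.r v < F.r u

/-- `sim(F[x..y), F'[x'..y'))` aligns `sub(u)` to `sub(u')`: the similarity
splits as `sim(F[x..l(u)), F'[x'..l(u'))) + sim(sub(u), sub(u')) + sim(F[r(u)..y), F'[r(u')..y'))`. -/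
def Aligns (F : BiForest n) (F' : BiForest n') (η : Fin n → Fin n' → ℤ)
    (x y x' y' : ℕ) (u : Fin n) (u' : Fin n') : Prop :=
  ∃ S S₁ S₂ S₃ : ℤ,
    IsGreatest (simSet F F' η x y x' y') S ∧
    IsGreatest (simSet F F' η x (F.l u) x' (F'.l u')) S₁ ∧
    IsGreatest (simSet F F' η (F.l u) (F.r u) (F'.l u') (F'.r u')) S₂ ∧
    IsGreatest (simSet F F' η (F.r u) y (F'.r u') y') S₃ ∧
    S = S₁ + S₂ + S₃

lemma l_lt_r (F : BiForest n) (v : Fin n) : F.l v < F.r v := by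
  have := F.l_add_two_le_r v; omega

lemma l_inj (F : BiForest n) {u v : Fin n} (h : F.l u = F.l v) : u = v := by
  have := @F.occ_inj (Sum.inl u) (Sum.inl v) (by simpa using h)
  simpa using this

lemma r_inj (F : BiForest n) {u v : Fin n} (h : F.r u = F.r v) : u = v := by
  have := @F.occ_inj (Sum.inr u) (Sum.inr v) (by simp only [Sum.elim_inr]; omega)
  simpa using this

lemma compat_symm (F : BiForest n) (F' : BiForest n') : Symmetric (Compat F F') := by
  intro p q hpq
  obtain ⟨h1, h2, h3, h4⟩ := hpq
  have hl : F.l p.1 ≠ F.l q.1 := fun e => h1 (l_inj F e)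
  have hl' : F'.l p.2 ≠ F'.l q.2 := fun e => h2 (l_inj F' e)
  have hr : F.r p.1 ≠ F.r q.1 := fun e => h1 (r_inj F e)
  have hr' : F'.r p.2 ≠ F'.r q.2 := fun e => h2 (r_inj F' e)
  exact ⟨h1.symm, h2.symm, by omega, by omega⟩

lemma wt_cons (η : Fin n → Fin n' → ℤ) (p) (M) : wt η (p :: M) = η p.1 p.2 + wt η M := by
  simp [wt]

lemma wt_append (η : Fin n → Fin n' → ℤ) (M N) : wt η (M ++ N) = wt η M + wt η N := by
  simp [wt]

lemma wt_filter (η : Fin n → Fin n' → ℤ) (p : Fin n × Fin n' → Bool) (M) :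
    wt η (M.filter p) + wt η (M.filter fun a => !(p a)) = wt η M := by
  induction M with
  | nil => simp [wt]
  | cons a t ih =>
    by_cases h : p a <;> simp [List.filter_cons, h, wt_cons] <;> linarith

lemma exists_greatest (F : BiForest n) (F' : BiForest n') (η : Fin n → Fin n' → ℤ)
    (P : Fin n → Prop) (P' : Fin n' → Prop) :
    ∃ S, IsGreatest (simSetP F F' η P P') S := by
  classical
  have hne : (simSetP F F' η P P').Nonempty :=
    ⟨0, [], List.Pairwise.nil, by simp, by simp [wt]⟩
  have hfin : (simSetP F F' η P P').Finite := by
    apply Set.Finite.subset (Set.Finite.image (wt η)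
      (List.finite_length_le (Fin n × Fin n') (Fintype.card (Fin n × Fin n'))))
    rintro s ⟨M, hM, -, rfl⟩
    refine ⟨M, ?_, rfl⟩
    have hnd : M.Nodup := hM.imp (fun hc => fun e => hc.1 (congrArg Prod.fst e))
    exact hnd.length_le_card
  obtain ⟨S, hSmem, hSub⟩ := Set.Finite.exists_maximalFor id _ hfin hne
  refine ⟨S, hSmem, fun s hs => ?_⟩
  by_contra h
  exact h (hSub hs (le_of_not_ge h))

section
lemma left_of_left {F : BiForest n} {F' : BiForest n'} {w u : Fin n} {w' u' : Fin n'}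
    (hc : Compat F F' (w, w') (u, u')) (h : F.r w ≤ F.l u) : F'.r w' ≤ F'.l u' := by
  obtain ⟨-, -, h3, h4⟩ := hc
  simp only at h3 h4
  have a1 := l_lt_r F w; have a2 := l_lt_r F u
  have a3 := l_lt_r F' w'; have a4 := l_lt_r F' u'
  have b1 : F'.l w' < F'.l u' := h3.mp (by omega)
  have b2 : F'.r w' < F'.r u' := h4.mp (by omega)
  rcases F'.nested w' u' with h | h | h | h <;> omega

lemma right_of_right {F : BiForest n} {F' : BiForest n'} {w u : Fin n} {w' u' : Fin n'}
    (hc : Compat F F' (w, w') (u, u')) (h : F.r u ≤ F.l w) : F'.r u' ≤ F'.l w' := by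
  obtain ⟨hne1, hne2, h3, h4⟩ := hc
  simp only at hne1 hne2 h3 h4
  have a1 := l_lt_r F w; have a2 := l_lt_r F u
  have a3 := l_lt_r F' w'; have a4 := l_lt_r F' u'
  have c1 : F'.l w' ≠ F'.l u' := fun e => hne2 (l_inj F' e)
  have c2 : F'.r w' ≠ F'.r u' := fun e => hne2 (r_inj F' e)
  rcases F'.nested w' u' with h | h | h | h <;> omega

lemma inside_of_inside {F : BiForest n} {F' : BiForest n'} {w u : Fin n} {w' u' : Fin n'}
    (hc : Compat F F' (w, w') (u, u')) (h1 : F.l u ≤ F.l w) (h2 : F.r w ≤ F.r u) :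
    F'.l u' ≤ F'.l w' ∧ F'.r w' ≤ F'.r u' := by
  obtain ⟨hne, -, h3, h4⟩ := hc
  simp only at hne h3 h4
  have c1 : F.l u ≠ F.l w := fun e => hne (l_inj F e.symm)
  have c2 : F.r w ≠ F.r u := fun e => hne (r_inj F e)
  omega

lemma compat_of_sep {F : BiForest n} {F' : BiForest n'} {p q : Fin n × Fin n'}
    (h : F.r p.1 ≤ F.l q.1) (h' : F'.r p.2 ≤ F'.l q.2) : Compat F F' p q := by
  have a1 := l_lt_r F p.1; have a2 := l_lt_r F q.1
  have a3 := l_lt_r F' p.2; have a4 := l_lt_r F' q.2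
  refine ⟨fun e => ?_, fun e => ?_, by omega, by omega⟩
  · rw [e] at h; omega
  · rw [e] at h'; omega

lemma mem_simSet {F : BiForest n} {F' : BiForest n'} {η : Fin n → Fin n' → ℤ}
    {x y x' y' : ℕ} {M : List (Fin n × Fin n')} (hM : IsMapping F F' M)
    (hmem : ∀ p ∈ M, F.mem x y p.1 ∧ F'.mem x' y' p.2) :
    wt η M ∈ simSet F F' η x y x' y' :=
  ⟨M, hM, hmem, rfl⟩

lemma combine {F : BiForest n} {F' : BiForest n'} {η : Fin n → Fin n' → ℤ}
    {x y x' y' : ℕ} {u : Fin n} {u' : Fin n'}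
    (hu : F.mem x y u) (hu' : F'.mem x' y' u') {s1 s2 s3 : ℤ}
    (h1 : s1 ∈ simSet F F' η x (F.l u) x' (F'.l u'))
    (h2 : s2 ∈ simSet F F' η (F.l u) (F.r u) (F'.l u') (F'.r u'))
    (h3 : s3 ∈ simSet F F' η (F.r u) y (F'.r u') y') :
    s1 + s2 + s3 ∈ simSet F F' η x y x' y' := by
  obtain ⟨M1, hM1, hm1, rfl⟩ := h1
  obtain ⟨M2, hM2, hm2, rfl⟩ := h2
  obtain ⟨M3, hM3, hm3, rfl⟩ := h3
  have hlr := l_lt_r F u; have hlr' := l_lt_r F' u'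
  obtain ⟨hux, huy⟩ := hu; obtain ⟨hux', huy'⟩ := hu'
  refine ⟨M1 ++ M2 ++ M3, ?_, ?_, by rw [wt_append, wt_append]⟩
  · refine List.pairwise_append.mpr ⟨List.pairwise_append.mpr ⟨hM1, hM2, ?_⟩, hM3, ?_⟩
    · intro a ha b hb
      exact compat_of_sep (le_trans (hm1 a ha).1.2 (hm2 b hb).1.1)
        (le_trans (hm1 a ha).2.2 (hm2 b hb).2.1)
    · intro a ha b hb
      rcases List.mem_append.mp ha with ha | ha
      · exact compat_of_sep (le_trans (hm1 a ha).1.2 (le_trans (le_of_lt hlr) (hm3 b hb).1.1))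
          (le_trans (hm1 a ha).2.2 (le_trans (le_of_lt hlr') (hm3 b hb).2.1))
      · exact compat_of_sep (le_trans (hm2 a ha).1.2 (hm3 b hb).1.1)
          (le_trans (hm2 a ha).2.2 (hm3 b hb).2.1)
  · intro p hp
    rcases List.mem_append.mp hp with hp | hp
    · rcases List.mem_append.mp hp with hp | hp
      · obtain ⟨⟨c1, c2⟩, c3, c4⟩ := hm1 p hp
        exact ⟨⟨c1, by omega⟩, c3, by omega⟩
      · obtain ⟨⟨c1, c2⟩, c3, c4⟩ := hm2 p hp
        exact ⟨⟨by omega, by omega⟩, by omega, by omega⟩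
    · obtain ⟨⟨c1, c2⟩, c3, c4⟩ := hm3 p hp
      have := l_lt_r F p.1; have := l_lt_r F' p.2
      exact ⟨⟨by omega, c2⟩, by omega, c4⟩
end
lemma key {F : BiForest n} {F' : BiForest n'} (η : Fin n → Fin n' → ℤ)
    {x y x' y' : ℕ} {u : Fin n} {u' : Fin n'} {M : List (Fin n × Fin n')}
    (hM : IsMapping F F' M)
    (hmem : ∀ p ∈ M, F.mem x y p.1 ∧ F'.mem x' y' p.2)
    (huu' : (u, u') ∈ M)
    (hnoanc : ∀ p ∈ M, ¬(F.l p.1 < F.l u ∧ F.r u < F.r p.1)) :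
    ∃ s1 s2 s3 : ℤ, wt η M = s1 + s2 + s3 ∧
      s1 ∈ simSet F F' η x (F.l u) x' (F'.l u') ∧
      s2 ∈ simSet F F' η (F.l u) (F.r u) (F'.l u') (F'.r u') ∧
      s3 ∈ simSet F F' η (F.r u) y (F'.r u') y' := by
  classical
  have hcompat : ∀ p ∈ M, p ≠ (u, u') → Compat F F' p (u, u') :=
    fun p hp hne => haveI : Std.Symm (Compat F F') := ⟨fun a b h => compat_symm F F' h⟩; hM.forall hp huu' hne
  have hreg : ∀ p ∈ M,
      (F.r p.1 ≤ F.l u ∧ F'.r p.2 ≤ F'.l u') ∨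
      (F.l u ≤ F.l p.1 ∧ F.r p.1 ≤ F.r u ∧ F'.l u' ≤ F'.l p.2 ∧ F'.r p.2 ≤ F'.r u') ∨
      (F.r u ≤ F.l p.1 ∧ F'.r u' ≤ F'.l p.2) := by
    intro p hp
    by_cases hpe : p = (u, u')
    · subst hpe
      exact Or.inr (Or.inl ⟨le_refl _, le_refl _, le_refl _, le_refl _⟩)
    · have hc : Compat F F' (p.1, p.2) (u, u') := hcompat p hp hpe
      have hne1 : p.1 ≠ u := hc.1
      rcases F.nested p.1 u with h | h | h | h
      · exact Or.inl ⟨h, left_of_left hc h⟩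
      · exact Or.inr (Or.inr ⟨h, right_of_right hc h⟩)
      · have d1 : F.l p.1 < F.l u := lt_of_le_of_ne h.1 (fun e => hne1 (l_inj F e))
        have d2 : F.r u < F.r p.1 := lt_of_le_of_ne h.2 (fun e => hne1 (r_inj F e.symm))
        exact absurd ⟨d1, d2⟩ (hnoanc p hp)
      · have := inside_of_inside hc h.1 h.2
        exact Or.inr (Or.inl ⟨h.1, h.2, this.1, this.2⟩)
  set q1 : Fin n × Fin n' → Bool := fun p => decide (F.r p.1 ≤ F.l u) with hq1
  set q2 : Fin n × Fin n' → Bool := fun p => decide (F.r p.1 ≤ F.r u) with hq2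
  set M1 := M.filter q1 with hM1
  set Mr := M.filter (fun a => !(q1 a)) with hMr
  set M2 := Mr.filter q2 with hM2
  set M3 := Mr.filter (fun a => !(q2 a)) with hM3
  have hw : wt η M = wt η M1 + wt η M2 + wt η M3 := by
    have h1 := wt_filter η q1 M
    have h2 := wt_filter η q2 Mr
    rw [← hM1, ← hMr, ← hM2, ← hM3] at *
    linarith
  have hs1 : M1.Sublist M := List.filter_sublist (l := M)
  have hsr : Mr.Sublist M := List.filter_sublist (l := M)
  have hs2 : M2.Sublist M := (List.filter_sublist (l := Mr)).trans hsr
  have hs3 : M3.Sublist M := (List.filter_sublist (l := Mr)).trans hsr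
  have hfacts : ∀ p : Fin n × Fin n', p ∈ M →
      (F.mem x y p.1 ∧ F'.mem x' y' p.2) := hmem
  refine ⟨wt η M1, wt η M2, wt η M3, hw, ?_, ?_, ?_⟩
  · refine mem_simSet (hM.sublist hs1) ?_
    intro p hp
    rw [hM1, List.mem_filter] at hp
    obtain ⟨hpM, hpf⟩ := hp
    rw [hq1] at hpf
    simp only [decide_eq_true_eq] at hpf
    obtain ⟨⟨a1, a2⟩, a3, a4⟩ := hmem p hpM
    have b1 := l_lt_r F p.1; have b2 := l_lt_r F' p.2
    have b3 := l_lt_r F u; have b4 := l_lt_r F' u'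
    rcases hreg p hpM with ⟨c1, c2⟩ | ⟨c1, c2, c3, c4⟩ | ⟨c1, c2⟩ <;>
      exact ⟨⟨by omega, by omega⟩, by omega, by omega⟩
  · refine mem_simSet (hM.sublist hs2) ?_
    intro p hp
    rw [hM2, List.mem_filter] at hp
    obtain ⟨hpMr, hpf⟩ := hp
    rw [hMr, List.mem_filter] at hpMr
    obtain ⟨hpM, hpnf⟩ := hpMr
    rw [hq2] at hpf; rw [hq1] at hpnf
    simp only [decide_eq_true_eq] at hpf
    simp only [Bool.not_eq_true', decide_eq_false_iff_not] at hpnf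
    obtain ⟨⟨a1, a2⟩, a3, a4⟩ := hmem p hpM
    have b1 := l_lt_r F p.1; have b2 := l_lt_r F' p.2
    have b3 := l_lt_r F u; have b4 := l_lt_r F' u'
    rcases hreg p hpM with ⟨c1, c2⟩ | ⟨c1, c2, c3, c4⟩ | ⟨c1, c2⟩ <;>
      exact ⟨⟨by omega, by omega⟩, by omega, by omega⟩
  · refine mem_simSet (hM.sublist hs3) ?_
    intro p hp
    rw [hM3, List.mem_filter] at hp
    obtain ⟨hpMr, hpf⟩ := hp
    rw [hMr, List.mem_filter] at hpMr
    obtain ⟨hpM, hpnf⟩ := hpMr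
    rw [hq2] at hpf; rw [hq1] at hpnf
    simp only [Bool.not_eq_true', decide_eq_false_iff_not] at hpf hpnf
    obtain ⟨⟨a1, a2⟩, a3, a4⟩ := hmem p hpM
    have b1 := l_lt_r F p.1; have b2 := l_lt_r F' p.2
    have b3 := l_lt_r F u; have b4 := l_lt_r F' u'
    rcases hreg p hpM with ⟨c1, c2⟩ | ⟨c1, c2, c3, c4⟩ | ⟨c1, c2⟩ <;>
      exact ⟨⟨by omega, by omega⟩, by omega, by omega⟩

/-- align-or-remove dichotomy: let `v ∈ F` and let `P` be the
set of proper ancestors of `v` (nodes strictly between the virtual root and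
`v`). For all subforests `F[x..y)`, `F'[x'..y')` with `sub(v) ⊆ F[x..y)`,
either (a) some `u ∈ P` has `sub(u)` aligned by the similarity to a subtree of
`F'[x'..y')`, or (b)
`sim(F[x..y), F'[x'..y')) = sim(F[x..l(v)) + F[l(v)..y), F'[x'..y'))`. -/
theorem stmt10 (F : BiForest n) (F' : BiForest n') (η : Fin n → Fin n' → ℤ)
    (v : Fin n) (x y x' y' : ℕ)
    (hsub : x ≤ F.l v ∧ F.r v ≤ y) :
    (∃ u : Fin n, ProperAnc F u v ∧ F.mem x y u ∧
        ∃ u' : Fin n', F'.mem x' y' u' ∧ Aligns F F' η x y x' y' u u') ∨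
    (∃ S : ℤ,
        IsGreatest (simSet F F' η x y x' y') S ∧
        IsGreatest (simSetP F F' η
          (fun w => F.mem x (F.l v) w ∨ F.mem (F.l v) y w)
          (F'.mem x' y')) S) := by
  classical
  obtain ⟨S, hS⟩ := exists_greatest F F' η (F.mem x y) (F'.mem x' y')
  obtain ⟨M, hM, hmem, hwM⟩ := hS.1
  by_cases hA : ∃ p ∈ M, ProperAnc F p.1 v
  · -- case (a): some proper ancestor of v is matched; take an outermost one
    left
    set L := M.filter (fun p => decide (ProperAnc F p.1 v)) with hL
    have hLne : L ≠ [] := by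
      obtain ⟨p, hp, hpa⟩ := hA
      intro h
      have : p ∈ L := by
        rw [hL, List.mem_filter]
        exact ⟨hp, by simpa using hpa⟩
      rw [h] at this
      simp at this
    cases hargm : L.argmax (fun p => F.r p.1) with
    | none => exact absurd (List.argmax_eq_none.mp hargm) hLne
    | some q =>
      have hqL : q ∈ L := List.argmax_mem (by rw [hargm]; rfl)
      have hqmax : ∀ a ∈ L, F.r a.1 ≤ F.r q.1 :=
        fun a ha => List.le_of_mem_argmax (f := fun p => F.r p.1) ha (by rw [hargm]; rfl)
      rw [hL, List.mem_filter] at hqL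
      obtain ⟨hqM, hqa⟩ := hqL
      have hqanc : ProperAnc F q.1 v := by simpa using hqa
      have hnoanc : ∀ p ∈ M, ¬(F.l p.1 < F.l q.1 ∧ F.r q.1 < F.r p.1) := by
        rintro p hp ⟨h1, h2⟩
        have hpanc : ProperAnc F p.1 v := ⟨lt_trans h1 hqanc.1, lt_trans hqanc.2 h2⟩
        have hpL : p ∈ L := by
          rw [hL, List.mem_filter]
          exact ⟨hp, by simpa using hpanc⟩
        exact absurd (hqmax p hpL) (by omega)
      obtain ⟨s1, s2, s3, hsplit, hs1, hs2, hs3⟩ :=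
        key η hM hmem (by simpa using hqM) hnoanc
      obtain ⟨S1, hS1⟩ := exists_greatest F F' η (F.mem x (F.l q.1)) (F'.mem x' (F'.l q.2))
      obtain ⟨S2, hS2⟩ :=
        exists_greatest F F' η (F.mem (F.l q.1) (F.r q.1)) (F'.mem (F'.l q.2) (F'.r q.2))
      obtain ⟨S3, hS3⟩ := exists_greatest F F' η (F.mem (F.r q.1) y) (F'.mem (F'.r q.2) y')
      have hmemq := hmem q hqM
      have hle1 : S ≤ S1 + S2 + S3 := by
        have := hS1.2 hs1
        have := hS2.2 hs2
        have := hS3.2 hs3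
        rw [hwM, hsplit]
        linarith
      have hle2 : S1 + S2 + S3 ≤ S :=
        hS.2 (combine hmemq.1 hmemq.2 hS1.1 hS2.1 hS3.1)
      refine ⟨q.1, hqanc, hmemq.1, q.2, hmemq.2,
        S, S1, S2, S3, hS, hS1, hS2, hS3, le_antisymm hle1 hle2⟩
  · -- case (b): no proper ancestor matched; M avoids the path P
    right
    push_neg at hA
    refine ⟨S, hS, ⟨M, hM, ?_, hwM⟩, ?_⟩
    · intro p hp
      obtain ⟨⟨a1, a2⟩, a34⟩ := hmem p hp
      refine ⟨?_, a34⟩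
      have hna : ¬ ProperAnc F p.1 v := hA p hp
      have b1 := l_lt_r F p.1; have b2 := l_lt_r F v
      by_cases hpv : p.1 = v
      · right
        rw [hpv]
        exact ⟨le_refl _, by rw [hpv] at a2; exact a2⟩
      · have c1 : F.l p.1 ≠ F.l v := fun e => hpv (l_inj F e)
        have c2 : F.r p.1 ≠ F.r v := fun e => hpv (r_inj F e)
        have hna' : ¬ (F.l p.1 < F.l v ∧ F.r v < F.r p.1) := hna
        rcases F.nested p.1 v with h | h | h | h
        · exact Or.inl ⟨a1, h⟩
        · exact Or.inr ⟨by omega, a2⟩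
        · exact absurd ⟨by omega, by omega⟩ hna'
        · exact Or.inr ⟨h.1, a2⟩
    · rintro s ⟨N, hN, hNmem, rfl⟩
      refine hS.2 ⟨N, hN, ?_, rfl⟩
      intro p hp
      obtain ⟨hP, hP'⟩ := hNmem p hp
      refine ⟨?_, hP'⟩
      have b2 := l_lt_r F v
      rcases hP with ⟨c1, c2⟩ | ⟨c1, c2⟩
      · exact ⟨c1, by omega⟩
      · exact ⟨by omega, c2⟩

end Stmt10
end

section
/- Balanced spine existence (heavy-path style): every nonempty ordered forest F contains a spine S ending at a leaf v such that both the set of nodes strictly to the left of the spine, F[0..l(v)), and the set strictly to the right, F[r(v)..2|F|+1), have size at most |F|/2. -/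
namespace Stmt13

/-- An ordered forest on node set `Fin n`, encoded by its bi-order traversal:
`l v` is the (1-based) position of the first occurrence of `v`, and `r v` is
one plus the position of the second occurrence. The positions `1, …, 2n` are
occupied by exactly one occurrence each, and occurrence intervals are
well-nested. -/
structure BiForest (n : ℕ) where
  l : Fin n → ℕ
  r : Fin n → ℕ
  one_le_l : ∀ v, 1 ≤ l v
  l_add_two_le_r : ∀ v, l v + 2 ≤ r v
  r_le : ∀ v, r v ≤ 2 * n + 1
  occ_inj : Function.Injective
    (Sum.elim (fun v => l v) (fun v => r v - 1) : Fin n ⊕ Fin n → ℕ)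
  nested : ∀ u v : Fin n,
    r u ≤ l v ∨ r v ≤ l u ∨ (l u ≤ l v ∧ r v ≤ r u) ∨ (l v ≤ l u ∧ r u ≤ r v)

variable {n n' : ℕ}

/-- Membership of a node `v` in the subforest `F[x..y)`: both bi-order
occurrences of `v` lie in positions `x, …, y-1`. -/
def BiForest.mem (F : BiForest n) (x y : ℕ) (v : Fin n) : Prop :=
  x ≤ F.l v ∧ F.r v ≤ y

/-- Two matched pairs are compatible if they consist of distinct nodes and
preserve the ancestor relations and the left-to-right (pre-order) order in
both directions; equivalently, the `l`-order and the `r`-order are preserved. -/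
def Compat (F : BiForest n) (F' : BiForest n') (p q : Fin n × Fin n') : Prop :=
  p.1 ≠ q.1 ∧ p.2 ≠ q.2 ∧
  (F.l p.1 < F.l q.1 ↔ F'.l p.2 < F'.l q.2) ∧
  (F.r p.1 < F.r q.1 ↔ F'.r p.2 < F'.r q.2)

/-- A valid similarity mapping between `F` and `F'`. -/
def IsMapping (F : BiForest n) (F' : BiForest n') (M : List (Fin n × Fin n')) : Prop :=
  M.Pairwise (Compat F F')

/-- Total weight of a mapping under the weight function `η`. -/
def wt (η : Fin n → Fin n' → ℤ) (M : List (Fin n × Fin n')) : ℤ :=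
  (M.map (fun p => η p.1 p.2)).sum

/-- The set of achievable mapping weights, where matched nodes are restricted
by the predicates `P` (on `F`) and `P'` (on `F'`); its greatest element is the
similarity of the corresponding subforests. -/
def simSetP (F : BiForest n) (F' : BiForest n') (η : Fin n → Fin n' → ℤ)
    (P : Fin n → Prop) (P' : Fin n' → Prop) : Set ℤ :=
  {s | ∃ M, IsMapping F F' M ∧ (∀ p ∈ M, P p.1 ∧ P' p.2) ∧ s = wt η M}

/-- The set of achievable mapping weights between the subforests `F[x..y)` and
`F'[x'..y')`; its greatest element is `sim(F[x..y), F'[x'..y'))`. -/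
def simSet (F : BiForest n) (F' : BiForest n') (η : Fin n → Fin n' → ℤ)
    (x y x' y' : ℕ) : Set ℤ :=
  simSetP F F' η (F.mem x y) (F'.mem x' y')

/-- `u` is a proper ancestor of `v`. -/
def ProperAnc (F : BiForest n) (u v : Fin n) : Prop :=
  F.l u < F.l v ∧ F.r v < F.r u

/-- `v` is a root of one of the trees of the forest. -/
def IsRoot (F : BiForest n) (v : Fin n) : Prop :=
  ∀ u, ¬ ProperAnc F u v

/-- `v` is a leaf. -/
def IsLeaf (F : BiForest n) (v : Fin n) : Prop :=
  ∀ u, ¬ ProperAnc F v u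

/-- `c` is a child of `p`. -/
def IsChild (F : BiForest n) (p c : Fin n) : Prop :=
  ProperAnc F p c ∧ ¬ ∃ w, ProperAnc F p w ∧ ProperAnc F w c

lemma l_inj (F : BiForest n) : Function.Injective F.l := by
  intro a b h
  have : (Sum.inl a : Fin n ⊕ Fin n) = Sum.inl b := F.occ_inj (by simpa using h)
  exact Sum.inl_injective this

lemma r_inj (F : BiForest n) : Function.Injective F.r := by
  intro a b h
  have : (Sum.inr a : Fin n ⊕ Fin n) = Sum.inr b := F.occ_inj (by simp [h])
  exact Sum.inr_injective this

lemma anc_trans (F : BiForest n) {a b c : Fin n} (h1 : ProperAnc F a b)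
    (h2 : ProperAnc F b c) : ProperAnc F a c :=
  ⟨h1.1.trans h2.1, h2.2.trans h1.2⟩

lemma chain_lemma (F : BiForest n) {u w v : Fin n}
    (hu : ProperAnc F u v ∨ u = v) (hw : ProperAnc F w v ∨ w = v)
    (hlw : F.l u < F.l w) : ProperAnc F u w := by
  have hlr := F.l_add_two_le_r
  rcases hw with hw | rfl
  · rcases hu with hu | rfl
    · rcases F.nested u w with h | h | h | h
      · exfalso; have := hu.2; have := hu.1; have := hw.1; have := hlr v; omega
      · exfalso; have := hu.1; have := hw.2; have := hw.1; have := hlr v; omega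
      · refine ⟨hlw, lt_of_le_of_ne h.2 ?_⟩
        intro he
        exact absurd (r_inj F he) (by intro hew; subst hew; exact lt_irrefl _ hlw)
      · exfalso; omega
    · exfalso; have := hw.1; omega
  · rcases hu with hu | rfl
    · exact hu
    · exact absurd hlw (lt_irrefl _)

lemma exists_spine (F : BiForest n) (v : Fin n) :
    ∃ (m : ℕ) (s : ℕ → Fin n), 0 < m ∧ IsRoot F (s 0) ∧
      (∀ i, i + 1 < m → IsChild F (s i) (s (i + 1))) ∧ s (m - 1) = v := by
  classical
  set rel : Fin n → Fin n → Prop := fun a b => F.l a ≤ F.l b with hrel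
  haveI : IsTotal (Fin n) rel := ⟨fun a b => le_total _ _⟩
  haveI : IsTrans (Fin n) rel := ⟨fun a b c h1 h2 => le_trans h1 h2⟩
  haveI : IsAntisymm (Fin n) rel := ⟨fun a b h1 h2 => l_inj F (le_antisymm h1 h2)⟩
  set A : Finset (Fin n) := Finset.univ.filter (fun u => ProperAnc F u v ∨ u = v) with hA
  set lst := A.sort rel with hlst
  have hmem : ∀ u, u ∈ lst ↔ (ProperAnc F u v ∨ u = v) := by
    intro u; simp [hlst, hA, Finset.mem_sort]
  have hsorted : lst.Pairwise rel := Finset.pairwise_sort _ _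
  have hnd : lst.Nodup := Finset.sort_nodup _ _
  have hvlst : v ∈ lst := (hmem v).2 (Or.inr rfl)
  have hm : 0 < lst.length := List.length_pos_of_mem hvlst
  have hstrict : ∀ i j (hi : i < lst.length) (hj : j < lst.length), i < j →
      F.l (lst.get ⟨i, hi⟩) < F.l (lst.get ⟨j, hj⟩) := by
    intro i j hi hj hij
    have h1 : rel (lst.get ⟨i, hi⟩) (lst.get ⟨j, hj⟩) :=
      List.Pairwise.rel_get_of_lt hsorted (by simpa using hij)
    refine lt_of_le_of_ne h1 (fun h => ?_)
    have := (List.Nodup.get_inj_iff hnd).1 (l_inj F h)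
    simp only [Fin.mk.injEq] at this
    omega
  have hrev : ∀ i j (hi : i < lst.length) (hj : j < lst.length),
      F.l (lst.get ⟨i, hi⟩) < F.l (lst.get ⟨j, hj⟩) → i < j := by
    intro i j hi hj h
    by_contra hc
    push_neg at hc
    rcases lt_or_eq_of_le hc with hc | hc
    · exact absurd (hstrict j i hj hi hc) (by omega)
    · subst hc; exact lt_irrefl _ h
  have hgd : ∀ i (h : i < lst.length), lst.getD i v = lst.get ⟨i, h⟩ := by
    intro i h
    rw [List.getD_eq_getElem lst v h]
    simp
  refine ⟨lst.length, fun i => lst.getD i v, hm, ?_, ?_, ?_⟩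
  · -- root
    intro u hu
    replace hu : ProperAnc F u (lst.getD 0 v) := hu
    rw [hgd 0 hm] at hu
    have h0 : ProperAnc F (lst.get ⟨0, hm⟩) v ∨ lst.get ⟨0, hm⟩ = v :=
      (hmem _).1 (lst.get_mem _)
    have huv : ProperAnc F u v := by
      rcases h0 with h0 | h0
      · exact anc_trans F hu h0
      · rwa [h0] at hu
    have humem : u ∈ lst := (hmem u).2 (Or.inl huv)
    obtain ⟨j, hj⟩ := List.mem_iff_get.1 humem
    have : (j : ℕ) < 0 := hrev j 0 j.2 hm (by rw [hj]; exact hu.1)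
    omega
  · -- children
    intro i hi
    have hi1 : i < lst.length := by omega
    show IsChild F (lst.getD i v) (lst.getD (i+1) v)
    rw [hgd i hi1, hgd (i+1) hi]
    have hmi : ProperAnc F (lst.get ⟨i, hi1⟩) v ∨ lst.get ⟨i, hi1⟩ = v :=
      (hmem _).1 (lst.get_mem _)
    have hmi1 : ProperAnc F (lst.get ⟨i+1, hi⟩) v ∨ lst.get ⟨i+1, hi⟩ = v :=
      (hmem _).1 (lst.get_mem _)
    constructor
    · exact chain_lemma F hmi hmi1 (hstrict i (i+1) hi1 hi (by omega))
    · rintro ⟨w, hw1, hw2⟩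
      have hwv : ProperAnc F w v := by
        rcases hmi1 with h | h
        · exact anc_trans F hw2 h
        · rwa [h] at hw2
      obtain ⟨j, hj⟩ := List.mem_iff_get.1 ((hmem w).2 (Or.inl hwv))
      have h1 : i < (j : ℕ) := hrev i j hi1 j.2 (by rw [hj]; exact hw1.1)
      have h2 : (j : ℕ) < i + 1 := hrev j (i+1) j.2 hi (by rw [hj]; exact hw2.1)
      omega
  · -- last = v
    have hl : lst.length - 1 < lst.length := by omega
    show lst.getD (lst.length - 1) v = v
    rw [hgd _ hl]
    obtain ⟨j, hj⟩ := List.mem_iff_get.1 hvlst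
    have hjle : (j : ℕ) ≤ lst.length - 1 := by have := j.2; omega
    rcases lt_or_eq_of_le hjle with hjl | hjl
    · exfalso
      have hlast : ProperAnc F (lst.get ⟨lst.length - 1, hl⟩) v ∨
          lst.get ⟨lst.length - 1, hl⟩ = v := (hmem _).1 (lst.get_mem _)
      have := hstrict j (lst.length - 1) j.2 hl hjl
      rw [hj] at this
      rcases hlast with h | h
      · have := h.1; omega
      · rw [h] at this; omega
    · rw [← hj]
      congr 1
      exact (Fin.ext hjl.symm)


/-- balanced spine existence: every nonempty ordered forest `F`
contains a spine (a root-to-leaf path `s₀, …, s_{m-1}` of consecutive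
parent-child nodes) ending at a leaf `v = s_{m-1}` such that both the set of
nodes strictly to the left of the spine, `F[0..l(v))`, and the set strictly to
the right, `F[r(v)..2|F|+1)`, have size at most `|F|/2`. -/
theorem stmt13 (hn : 0 < n) (F : BiForest n) :
    ∃ (m : ℕ) (s : ℕ → Fin n), 0 < m ∧
      IsRoot F (s 0) ∧
      (∀ i, i + 1 < m → IsChild F (s i) (s (i + 1))) ∧
      IsLeaf F (s (m - 1)) ∧
      2 * {u : Fin n | F.r u ≤ F.l (s (m - 1))}.ncard ≤ n ∧
      2 * {u : Fin n | F.r (s (m - 1)) ≤ F.l u}.ncard ≤ n := by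
  classical
  have hlr : ∀ v : Fin n, F.l v + 2 ≤ F.r v := F.l_add_two_le_r
  have hcard : ∀ s : Set (Fin n), s.ncard ≤ n := by
    intro s
    have := Set.ncard_le_ncard (Set.subset_univ s) (Set.toFinite _)
    simpa [Set.ncard_univ] using this
  -- a leaf with empty left set exists
  obtain ⟨v0, _, hv0min⟩ := Finset.exists_min_image Finset.univ F.r ⟨⟨0, hn⟩, Finset.mem_univ _⟩
  have hv0leaf : IsLeaf F v0 := fun u hu => absurd (hv0min u (Finset.mem_univ u)) (not_le.2 hu.2)
  have hv0f : 2 * {u : Fin n | F.r u ≤ F.l v0}.ncard ≤ n := by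
    have : {u : Fin n | F.r u ≤ F.l v0} = ∅ := by
      ext u
      simp only [Set.mem_setOf_eq, Set.mem_empty_iff_false, iff_false, not_le]
      have := hv0min u (Finset.mem_univ u)
      have := hlr v0
      omega
    simp [this]
  -- leaf set with bounded left count
  set S : Finset (Fin n) :=
    Finset.univ.filter (fun x => IsLeaf F x ∧ 2 * {u : Fin n | F.r u ≤ F.l x}.ncard ≤ n)
    with hS
  have hv0S : v0 ∈ S := by simp [hS, hv0leaf, hv0f]
  obtain ⟨v, hvS, hvmax⟩ := Finset.exists_max_image S
    (fun x => {u : Fin n | F.r u ≤ F.l x}.ncard) ⟨v0, hv0S⟩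
  rw [hS, Finset.mem_filter] at hvS
  obtain ⟨-, hvleaf, hvf⟩ := hvS
  -- right bound by contradiction
  have hvg : 2 * {u : Fin n | F.r v ≤ F.l u}.ncard ≤ n := by
    by_contra hR
    push_neg at hR
    -- R v is nonempty
    have hRne : ({u : Fin n | F.r v ≤ F.l u}).Nonempty := by
      rcases Set.eq_empty_or_nonempty {u : Fin n | F.r v ≤ F.l u} with h | h
      · rw [h] at hR; simp at hR
      · exact h
    obtain ⟨w0, hw0⟩ := hRne
    obtain ⟨w, hwmem, hwmin⟩ := Finset.exists_min_image
      (Finset.univ.filter (fun u => F.r v ≤ F.l u)) F.r ⟨w0, by simpa using hw0⟩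
    rw [Finset.mem_filter] at hwmem
    have hwR : F.r v ≤ F.l w := hwmem.2
    have hwmin' : ∀ u : Fin n, F.r v ≤ F.l u → F.r w ≤ F.r u := by
      intro u hu
      exact hwmin u (by simp [hu])
    -- w is a leaf
    have hwleaf : IsLeaf F w := by
      intro u hu
      have : F.r v ≤ F.l u := le_of_lt (lt_of_le_of_lt hwR hu.1)
      exact absurd (hwmin' u this) (not_le.2 hu.2)
    -- left set of w disjoint from right set of v
    have hdisj : Disjoint {u : Fin n | F.r u ≤ F.l w} {u : Fin n | F.r v ≤ F.l u} := by
      rw [Set.disjoint_left]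
      intro u h1 h2
      simp only [Set.mem_setOf_eq] at h1 h2
      have := hwmin' u h2
      have := hlr w
      omega
    have hsum : {u : Fin n | F.r u ≤ F.l w}.ncard + {u : Fin n | F.r v ≤ F.l u}.ncard ≤ n := by
      rw [← Set.ncard_union_eq hdisj (Set.toFinite _) (Set.toFinite _)]
      exact hcard _
    have hwf : 2 * {u : Fin n | F.r u ≤ F.l w}.ncard ≤ n := by omega
    have hwS : w ∈ S := by simp [hS, hwleaf, hwf]
    have hle := hvmax w hwS
    -- but left set of w is strictly bigger than that of v
    have hsub : insert v {u : Fin n | F.r u ≤ F.l v} ⊆ {u : Fin n | F.r u ≤ F.l w} := by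
      intro u hu
      rcases Set.mem_insert_iff.1 hu with rfl | hu
      · exact hwR
      · simp only [Set.mem_setOf_eq] at hu ⊢
        have := hlr v
        omega
    have hvnot : v ∉ {u : Fin n | F.r u ≤ F.l v} := by
      simp only [Set.mem_setOf_eq]
      have := hlr v
      omega
    have : {u : Fin n | F.r u ≤ F.l v}.ncard + 1 ≤ {u : Fin n | F.r u ≤ F.l w}.ncard := by
      have := Set.ncard_le_ncard hsub (Set.toFinite _)
      rwa [Set.ncard_insert_of_notMem hvnot (Set.toFinite _)] at this
    omega
  obtain ⟨m, s, hm, hroot, hchild, hlast⟩ := exists_spine F v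
  exact ⟨m, s, hm, hroot, hchild, hlast ▸ hvleaf, hlast ▸ hvf, hlast ▸ hvg⟩


end Stmt13
end

section
/- Longest paths in the alignment graph compute similarity: for forests F, F' and the alignment graph Ḡ with respect to (w_{F,F'}, F, F') where w_{F,F'}(i,i') = sim(sub(v_i), sub(v_{i'}')), the maximum-weight path in Ḡ from vertex (i,i') to vertex (j,j') equals sim(F[l(v_i)..l(v_j)), F'[l(v_{i'}')..l(v_{j'}'))), for all i ≤ j and i' ≤ j' (with the convention l(v_{|F|+1}) = 2|F|+1). -/
namespace Stmt15

/-- An ordered forest on node set `Fin n`, encoded by its bi-order traversal: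
`l v` is the (1-based) position of the first occurrence of `v`, and `r v` is
one plus the position of the second occurrence. The positions `1, …, 2n` are
occupied by exactly one occurrence each, and occurrence intervals are
well-nested. -/
structure BiForest (n : ℕ) where
  l : Fin n → ℕ
  r : Fin n → ℕ
  one_le_l : ∀ v, 1 ≤ l v
  l_add_two_le_r : ∀ v, l v + 2 ≤ r v
  r_le : ∀ v, r v ≤ 2 * n + 1
  occ_inj : Function.Injective
    (Sum.elim (fun v => l v) (fun v => r v - 1) : Fin n ⊕ Fin n → ℕ)
  nested : ∀ u v : Fin n,
    r u ≤ l v ∨ r v ≤ l u ∨ (l u ≤ l v ∧ r v ≤ r u) ∨ (l v ≤ l u ∧ r u ≤ r v)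

variable {n n' : ℕ}

/-- Membership of a node `v` in the subforest `F[x..y)`: both bi-order
occurrences of `v` lie in positions `x, …, y-1`. -/
def BiForest.mem (F : BiForest n) (x y : ℕ) (v : Fin n) : Prop :=
  x ≤ F.l v ∧ F.r v ≤ y

/-- Two matched pairs are compatible if they consist of distinct nodes and
preserve the ancestor relations and the left-to-right (pre-order) order in
both directions; equivalently, the `l`-order and the `r`-order are preserved. -/
def Compat (F : BiForest n) (F' : BiForest n') (p q : Fin n × Fin n') : Prop :=
  p.1 ≠ q.1 ∧ p.2 ≠ q.2 ∧
  (F.l p.1 < F.l q.1 ↔ F'.l p.2 < F'.l q.2) ∧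
  (F.r p.1 < F.r q.1 ↔ F'.r p.2 < F'.r q.2)

/-- A valid similarity mapping between `F` and `F'`. -/
def IsMapping (F : BiForest n) (F' : BiForest n') (M : List (Fin n × Fin n')) : Prop :=
  M.Pairwise (Compat F F')

/-- Total weight of a mapping under the weight function `η`. -/
def wt (η : Fin n → Fin n' → ℤ) (M : List (Fin n × Fin n')) : ℤ :=
  (M.map (fun p => η p.1 p.2)).sum

/-- The set of achievable mapping weights, where matched nodes are restricted
by the predicates `P` (on `F`) and `P'` (on `F'`); its greatest element is the
similarity of the corresponding subforests. -/
def simSetP (F : BiForest n) (F' : BiForest n') (η : Fin n → Fin n' → ℤ)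
    (P : Fin n → Prop) (P' : Fin n' → Prop) : Set ℤ :=
  {s | ∃ M, IsMapping F F' M ∧ (∀ p ∈ M, P p.1 ∧ P' p.2) ∧ s = wt η M}

/-- The set of achievable mapping weights between the subforests `F[x..y)` and
`F'[x'..y')`; its greatest element is `sim(F[x..y), F'[x'..y'))`. -/
def simSet (F : BiForest n) (F' : BiForest n') (η : Fin n → Fin n' → ℤ)
    (x y x' y' : ℕ) : Set ℤ :=
  simSetP F F' η (F.mem x y) (F'.mem x' y')

/-- A single weighted edge of the alignment graph on `[1,n+1] × [1,n'+1]`: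
right and up edges of weight `0`, and diagonal edges `(i,i') → (π i, π' i')`
of weight `W i i' = sim(sub(vᵢ), sub(v'_{i'}))`. -/
def Step (n n' : ℕ) (π π' : ℕ → ℕ) (W : ℕ → ℕ → ℤ) (p q : ℕ × ℕ) (c : ℤ) : Prop :=
  1 ≤ p.1 ∧ p.1 ≤ n + 1 ∧ 1 ≤ p.2 ∧ p.2 ≤ n' + 1 ∧
  1 ≤ q.1 ∧ q.1 ≤ n + 1 ∧ 1 ≤ q.2 ∧ q.2 ≤ n' + 1 ∧
  ((q = (p.1 + 1, p.2) ∧ c = 0) ∨ (q = (p.1, p.2 + 1) ∧ c = 0) ∨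
    (p.1 ≤ n ∧ p.2 ≤ n' ∧ q = (π p.1, π' p.2) ∧ c = W p.1 p.2))

/-- `PathW step p q c`: there is a directed path from `p` to `q` of total
weight `c`. -/
inductive PathW (step : ℕ × ℕ → ℕ × ℕ → ℤ → Prop) : ℕ × ℕ → ℕ × ℕ → ℤ → Prop where
  | refl (p : ℕ × ℕ) : PathW step p p 0
  | tail {p q r : ℕ × ℕ} {c d : ℤ} :
      PathW step p q c → step q r d → PathW step p r (c + d)

section AuxLemmas

lemma l_inj (F : BiForest n) : Function.Injective F.l := by
  intro a b h
  have h2 : (Sum.elim (fun v => F.l v) (fun v => F.r v - 1) : Fin n ⊕ Fin n → ℕ)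
      (Sum.inl a) = (Sum.elim (fun v => F.l v) (fun v => F.r v - 1)) (Sum.inl b) := by
    simpa using h
  simpa using F.occ_inj h2

lemma r_inj (F : BiForest n) : Function.Injective F.r := by
  intro a b h
  have h2 : (Sum.elim (fun v => F.l v) (fun v => F.r v - 1) : Fin n ⊕ Fin n → ℕ)
      (Sum.inr a) = (Sum.elim (fun v => F.l v) (fun v => F.r v - 1)) (Sum.inr b) := by
    simp [h]
  simpa using F.occ_inj h2

lemma after_of_lt (F : BiForest n) {u w : Fin n} (h1 : F.l u < F.l w)
    (h2 : F.r u < F.r w) : F.r u ≤ F.l w := by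
  have hw := F.l_add_two_le_r w
  rcases F.nested u w with h | h | h | h
  · exact h
  · omega
  · omega
  · omega

lemma compat_symm (F : BiForest n) (F' : BiForest n') : Symmetric (Compat F F') := by
  intro p q h
  obtain ⟨h1, h2, h3, h4⟩ := h
  have a1 : F.l p.1 ≠ F.l q.1 := fun e => h1 (l_inj F e)
  have a2 : F'.l p.2 ≠ F'.l q.2 := fun e => h2 (l_inj F' e)
  have a3 : F.r p.1 ≠ F.r q.1 := fun e => h1 (r_inj F e)
  have a4 : F'.r p.2 ≠ F'.r q.2 := fun e => h2 (r_inj F' e)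
  exact ⟨h1.symm, h2.symm, by omega, by omega⟩

lemma wt_append (η : Fin n → Fin n' → ℤ) (M N : List (Fin n × Fin n')) :
    wt η (M ++ N) = wt η M + wt η N := by
  simp [wt]

lemma wt_perm (η : Fin n → Fin n' → ℤ) {M N : List (Fin n × Fin n')}
    (h : M.Perm N) : wt η M = wt η N := (h.map _).sum_eq

lemma exists_min {α : Type*} (f : α → ℕ) :
    ∀ (l : List α), l ≠ [] → ∃ a ∈ l, ∀ b ∈ l, f a ≤ f b := by
  intro l
  induction l with
  | nil => intro h; exact absurd rfl h
  | cons x xs ih =>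
    intro _
    rcases eq_or_ne xs [] with rfl | hne
    · exact ⟨x, List.mem_cons_self, by intro b hb; simp at hb; subst hb; exact le_refl _⟩
    · obtain ⟨a, ha, hmin⟩ := ih hne
      rcases le_or_gt (f x) (f a) with h | h
      · refine ⟨x, List.mem_cons_self, ?_⟩
        intro b hb
        rcases List.mem_cons.mp hb with rfl | hb
        · exact le_refl _
        · exact le_trans h (hmin b hb)
      · refine ⟨a, List.mem_cons_of_mem _ ha, ?_⟩
        intro b hb
        rcases List.mem_cons.mp hb with rfl | hb
        · exact le_of_lt h
        · exact hmin b hb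

lemma pathw_trans {step : ℕ × ℕ → ℕ × ℕ → ℤ → Prop} {p q r : ℕ × ℕ} {c d : ℤ}
    (h1 : PathW step p q c) (h2 : PathW step q r d) : PathW step p r (c + d) := by
  induction h2 with
  | refl => simpa using h1
  | tail h s ih =>
    rw [← add_assoc]
    exact PathW.tail ih s

lemma path_right (π π' : ℕ → ℕ) (W : ℕ → ℕ → ℤ) :
    ∀ k i i', 1 ≤ i → i + k ≤ n + 1 → 1 ≤ i' → i' ≤ n' + 1 →
      PathW (Step n n' π π' W) (i, i') (i + k, i') 0 := by
  intro k
  induction k with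
  | zero => intro i i' _ _ _ _; exact PathW.refl _
  | succ k ih =>
    intro i i' h1 h2 h3 h4
    have hp := ih i i' h1 (by omega) h3 h4
    have hs : Step n n' π π' W (i + k, i') (i + (k + 1), i') 0 :=
      ⟨by omega, by omega, h3, h4, by omega, by omega, h3, h4,
        Or.inl ⟨by simp; omega, rfl⟩⟩
    simpa using PathW.tail hp hs

lemma path_up (π π' : ℕ → ℕ) (W : ℕ → ℕ → ℤ) :
    ∀ k i i', 1 ≤ i → i ≤ n + 1 → 1 ≤ i' → i' + k ≤ n' + 1 →
      PathW (Step n n' π π' W) (i, i') (i, i' + k) 0 := by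
  intro k
  induction k with
  | zero => intro i i' _ _ _ _; exact PathW.refl _
  | succ k ih =>
    intro i i' h1 h2 h3 h4
    have hp := ih i i' h1 h2 h3 (by omega)
    have hs : Step n n' π π' W (i, i' + k) (i, i' + (k + 1)) 0 :=
      ⟨h1, h2, by omega, by omega, h1, h2, by omega, by omega,
        Or.inr (Or.inl ⟨by simp; omega, rfl⟩)⟩
    simpa using PathW.tail hp hs

lemma path_zero (π π' : ℕ → ℕ) (W : ℕ → ℕ → ℤ) {i j i' j' : ℕ}
    (h1 : 1 ≤ i) (h2 : i ≤ j) (h3 : j ≤ n + 1)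
    (h4 : 1 ≤ i') (h5 : i' ≤ j') (h6 : j' ≤ n' + 1) :
    PathW (Step n n' π π' W) (i, i') (j, j') 0 := by
  have hr : PathW (Step n n' π π' W) (i, i') (j, i') 0 := by
    have := path_right (n := n) (n' := n') π π' W (j - i) i i' h1 (by omega) h4 (by omega)
    have he : i + (j - i) = j := by omega
    rwa [he] at this
  have hu : PathW (Step n n' π π' W) (j, i') (j, j') 0 := by
    have := path_up (n := n) (n' := n') π π' W (j' - i') j i' (by omega) h3 h4 (by omega)
    have he : i' + (j' - i') = j' := by omega
    rwa [he] at this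
  simpa using pathw_trans hr hu

end AuxLemmas


lemma L_mono (F : BiForest n) (v : ℕ → Fin n) (L : ℕ → ℕ)
    (hv_mono : ∀ i j, 1 ≤ i → i < j → j ≤ n → F.l (v i) < F.l (v j))
    (hL1 : ∀ i, 1 ≤ i → i ≤ n → L i = F.l (v i)) (hL2 : L (n + 1) = 2 * n + 1) :
    ∀ a b, 1 ≤ a → a ≤ b → b ≤ n + 1 → L a ≤ L b := by
  intro a b ha hab hb
  rcases eq_or_lt_of_le hab with rfl | hlt
  · exact le_refl _
  rcases Nat.lt_or_ge b (n + 1) with hb' | hb'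
  · have hbn : b ≤ n := by omega
    rw [hL1 a ha (by omega), hL1 b (by omega) hbn]
    exact le_of_lt (hv_mono a b ha hlt hbn)
  · have hbe : b = n + 1 := by omega
    subst hbe
    rw [hL2, hL1 a ha (by omega)]
    have h1 := F.r_le (v a)
    have h2 := F.l_add_two_le_r (v a)
    omega

lemma pi_bound (F : BiForest n) (v : ℕ → Fin n) (π : ℕ → ℕ) (L : ℕ → ℕ)
    (hv_mono : ∀ i j, 1 ≤ i → i < j → j ≤ n → F.l (v i) < F.l (v j))
    (hL1 : ∀ i, 1 ≤ i → i ≤ n → L i = F.l (v i)) (hL2 : L (n + 1) = 2 * n + 1)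
    (hπ : ∀ i, 1 ≤ i → i ≤ n →
      i < π i ∧ π i ≤ n + 1 ∧
      (∀ j, i ≤ j → j < π i → j ≤ n → F.mem (F.l (v i)) (F.r (v i)) (v j)) ∧
      (π i ≤ n → ¬ F.mem (F.l (v i)) (F.r (v i)) (v (π i)))) :
    ∀ a, 1 ≤ a → a ≤ n → F.r (v a) ≤ L (π a) := by
  intro a h1 h2
  obtain ⟨hlt, hle, _, hout⟩ := hπ a h1 h2
  rcases Nat.lt_or_ge (π a) (n + 1) with h | h
  · have hn : π a ≤ n := by omega
    rw [hL1 _ (by omega) hn]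
    have hl : F.l (v a) < F.l (v (π a)) := hv_mono a (π a) h1 hlt hn
    have hnm := hout hn
    have hw := F.l_add_two_le_r (v (π a))
    rcases F.nested (v a) (v (π a)) with c | c | c | c
    · exact c
    · omega
    · exact absurd c hnm
    · omega
  · have he : π a = n + 1 := by omega
    rw [he, hL2]
    exact F.r_le _


/-- longest paths in the alignment graph compute similarity.
Let `v : [1,n] → F` enumerate the nodes of `F` in pre-order (strictly
increasing `l`-values) and similarly `v'` for `F'`; let `π i` be the smallest
`j ≥ i` such that `v j ∉ sub(v i)` (`n+1` if none), similarly `π'`; let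
`L i = l(v i)` with `L (n+1) = 2n+1`, similarly `L'`; and let
`W i i' = sim(sub(v i), sub(v' i'))`. Then for all `i ≤ j`, `i' ≤ j'`, the
maximum weight of a path from `(i,i')` to `(j,j')` equals
`sim(F[L i .. L j), F'[L' i' .. L' j'))`. -/


theorem stmt15 (F : BiForest n) (F' : BiForest n') (η : Fin n → Fin n' → ℤ)
    (v : ℕ → Fin n) (v' : ℕ → Fin n')
    (π π' : ℕ → ℕ) (L L' : ℕ → ℕ) (W : ℕ → ℕ → ℤ)
    (hv_mono : ∀ i j, 1 ≤ i → i < j → j ≤ n → F.l (v i) < F.l (v j))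
    (hv_surj : ∀ u : Fin n, ∃ i, 1 ≤ i ∧ i ≤ n ∧ v i = u)
    (hv'_mono : ∀ i j, 1 ≤ i → i < j → j ≤ n' → F'.l (v' i) < F'.l (v' j))
    (hv'_surj : ∀ u : Fin n', ∃ i, 1 ≤ i ∧ i ≤ n' ∧ v' i = u)
    (hπ : ∀ i, 1 ≤ i → i ≤ n →
      i < π i ∧ π i ≤ n + 1 ∧
      (∀ j, i ≤ j → j < π i → j ≤ n → F.mem (F.l (v i)) (F.r (v i)) (v j)) ∧
      (π i ≤ n → ¬ F.mem (F.l (v i)) (F.r (v i)) (v (π i))))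
    (hπ' : ∀ i, 1 ≤ i → i ≤ n' →
      i < π' i ∧ π' i ≤ n' + 1 ∧
      (∀ j, i ≤ j → j < π' i → j ≤ n' → F'.mem (F'.l (v' i)) (F'.r (v' i)) (v' j)) ∧
      (π' i ≤ n' → ¬ F'.mem (F'.l (v' i)) (F'.r (v' i)) (v' (π' i))))
    (hL : (∀ i, 1 ≤ i → i ≤ n → L i = F.l (v i)) ∧ L (n + 1) = 2 * n + 1)
    (hL' : (∀ i, 1 ≤ i → i ≤ n' → L' i = F'.l (v' i)) ∧ L' (n' + 1) = 2 * n' + 1)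
    (hW : ∀ i i', 1 ≤ i → i ≤ n → 1 ≤ i' → i' ≤ n' →
      IsGreatest (simSet F F' η (F.l (v i)) (F.r (v i)) (F'.l (v' i')) (F'.r (v' i')))
        (W i i')) :
    ∀ i j i' j' (S T : ℤ), 1 ≤ i → i ≤ j → j ≤ n + 1 →
      1 ≤ i' → i' ≤ j' → j' ≤ n' + 1 →
      IsGreatest {c | PathW (Step n n' π π' W) (i, i') (j, j') c} S →
      IsGreatest (simSet F F' η (L i) (L j) (L' i') (L' j')) T →
      S = T := by
  intro i j i' j' S T hi hij hj hi' hij' hj' hS hT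
  have hLm := L_mono F v L hv_mono hL.1 hL.2
  have hLm' := L_mono F' v' L' hv'_mono hL'.1 hL'.2
  have hpib := pi_bound F v π L hv_mono hL.1 hL.2 hπ
  have hpib' := pi_bound F' v' π' L' hv'_mono hL'.1 hL'.2 hπ'
  -- Direction 1 : paths give mappings of the same weight
  have B : ∀ p q c, PathW (Step n n' π π' W) p q c →
      1 ≤ p.1 → p.1 ≤ n + 1 → 1 ≤ p.2 → p.2 ≤ n' + 1 →
      p.1 ≤ q.1 ∧ q.1 ≤ n + 1 ∧ p.2 ≤ q.2 ∧ q.2 ≤ n' + 1 ∧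
      ∃ M, IsMapping F F' M ∧
        (∀ x ∈ M, F.mem (L p.1) (L q.1) x.1 ∧ F'.mem (L' p.2) (L' q.2) x.2) ∧
        c = wt η M := by
    intro p q c hpath
    induction hpath with
    | refl =>
      intro h1 h2 h3 h4
      exact ⟨le_refl _, h2, le_refl _, h4, [], List.Pairwise.nil, by simp, by simp [wt]⟩
    | @tail q1 r1 c1 d1 hpq hstep ih =>
      intro h1 h2 h3 h4
      obtain ⟨hpq1, hqn, hpq2, hqn', M, hM, hmem, hc⟩ := ih h1 h2 h3 h4
      obtain ⟨hq1, hq1n, hq2, hq2n, hr1, hr1n, hr2, hr2n, hcase⟩ := hstep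
      rcases hcase with ⟨hqe, hde⟩ | ⟨hqe, hde⟩ | ⟨hq1le, hq2le, hqe, hde⟩
      · subst hqe; subst hde
        have hr1n' : q1.1 + 1 ≤ n + 1 := hr1n
        refine ⟨by omega, hr1n', hpq2, hqn', M, hM, ?_, by simp [hc]⟩
        intro x hx
        obtain ⟨hx1, hx2⟩ := hmem x hx
        exact ⟨⟨hx1.1, le_trans hx1.2 (hLm q1.1 (q1.1 + 1) hq1 (by omega) hr1n')⟩, hx2⟩
      · subst hqe; subst hde
        have hr2n' : q1.2 + 1 ≤ n' + 1 := hr2n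
        refine ⟨hpq1, hqn, by omega, hr2n', M, hM, ?_, by simp [hc]⟩
        intro x hx
        obtain ⟨hx1, hx2⟩ := hmem x hx
        exact ⟨hx1, ⟨hx2.1, le_trans hx2.2 (hLm' q1.2 (q1.2 + 1) hq2 (by omega) hr2n')⟩⟩
      · subst hqe; subst hde
        have hπq := hπ q1.1 hq1 hq1le
        have hπq' := hπ' q1.2 hq2 hq2le
        have hr1n' : π q1.1 ≤ n + 1 := hr1n
        have hr2n' : π' q1.2 ≤ n' + 1 := hr2n
        obtain ⟨NW, hNW, hNWmem, hNWw⟩ := (hW q1.1 q1.2 hq1 hq1le hq2 hq2le).1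
        have hLq : L q1.1 = F.l (v q1.1) := hL.1 q1.1 hq1 hq1le
        have hLq' : L' q1.2 = F'.l (v' q1.2) := hL'.1 q1.2 hq2 hq2le
        have hrb : F.r (v q1.1) ≤ L (π q1.1) := hpib q1.1 hq1 hq1le
        have hrb' : F'.r (v' q1.2) ≤ L' (π' q1.2) := hpib' q1.2 hq2 hq2le
        have hcross : ∀ x ∈ M, ∀ y ∈ NW, Compat F F' x y := by
          intro x hx y hy
          obtain ⟨hx1, hx2⟩ := hmem x hx
          obtain ⟨hy1, hy2⟩ := hNWmem y hy
          have e1 : F.r x.1 ≤ F.l y.1 := le_trans (hLq ▸ hx1.2) hy1.1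
          have e2 : F'.r x.2 ≤ F'.l y.2 := le_trans (hLq' ▸ hx2.2) hy2.1
          have a1 := F.l_add_two_le_r x.1
          have a2 := F.l_add_two_le_r y.1
          have a3 := F'.l_add_two_le_r x.2
          have a4 := F'.l_add_two_le_r y.2
          refine ⟨fun e => ?_, fun e => ?_, by omega, by omega⟩
          · rw [e] at e1; omega
          · rw [e] at e2; omega
        have hpair : IsMapping F F' (M ++ NW) := List.pairwise_append.mpr ⟨hM, hNW, hcross⟩
        have hLqπ : L q1.1 ≤ L (π q1.1) := by
          have := F.l_add_two_le_r (v q1.1); omega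
        have hLqπ' : L' q1.2 ≤ L' (π' q1.2) := by
          have := F'.l_add_two_le_r (v' q1.2); omega
        refine ⟨by omega, hr1n', by omega, hr2n', M ++ NW, hpair, ?_, ?_⟩
        · intro x hx
          rcases List.mem_append.mp hx with hx | hx
          · obtain ⟨hx1, hx2⟩ := hmem x hx
            exact ⟨⟨hx1.1, le_trans hx1.2 hLqπ⟩, ⟨hx2.1, le_trans hx2.2 hLqπ'⟩⟩
          · obtain ⟨hy1, hy2⟩ := hNWmem x hx
            refine ⟨⟨le_trans (le_trans (hLm p.1 q1.1 h1 hpq1 hq1n) (le_of_eq hLq)) hy1.1,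
              le_trans hy1.2 hrb⟩,
              ⟨le_trans (le_trans (hLm' p.2 q1.2 h3 hpq2 hq2n) (le_of_eq hLq')) hy2.1,
              le_trans hy2.2 hrb'⟩⟩
        · show c1 + W q1.1 q1.2 = wt η (M ++ NW)
          rw [wt_append, hc, hNWw]
  -- S ≤ T
  have hST : S ≤ T := by
    obtain ⟨_, _, _, _, M, hM, hmem, hc⟩ :=
      B (i, i') (j, j') S hS.1 hi (le_trans hij hj) hi' (le_trans hij' hj')
    exact hT.2 ⟨M, hM, hmem, hc⟩
  -- Direction 2 : mappings give paths of at least the same weight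
  have C : ∀ (N : ℕ) (M : List (Fin n × Fin n')) (a b a' b' : ℕ), M.length ≤ N →
      1 ≤ a → a ≤ b → b ≤ n + 1 → 1 ≤ a' → a' ≤ b' → b' ≤ n' + 1 →
      IsMapping F F' M →
      (∀ x ∈ M, F.mem (L a) (L b) x.1 ∧ F'.mem (L' a') (L' b') x.2) →
      ∃ c, PathW (Step n n' π π' W) (a, a') (b, b') c ∧ wt η M ≤ c := by
    intro N
    induction N with
    | zero =>
      intro M a b a' b' hlen h1 h2 h3 h4 h5 h6 _ _
      have hMnil : M = [] := List.eq_nil_of_length_eq_zero (by omega)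
      subst hMnil
      exact ⟨0, path_zero π π' W h1 h2 h3 h4 h5 h6, by simp [wt]⟩
    | succ N ih =>
      intro M a b a' b' hlen h1 h2 h3 h4 h5 h6 hmap hmem
      rcases eq_or_ne M [] with rfl | hne
      · exact ⟨0, path_zero π π' W h1 h2 h3 h4 h5 h6, by simp [wt]⟩
      obtain ⟨p, hpM, hpmin⟩ := exists_min (fun x => F.l x.1) M hne
      obtain ⟨s, t, hst⟩ := List.append_of_mem hpM
      set M2 := s ++ t with hM2def
      have hperm : M.Perm (p :: M2) := by rw [hst, hM2def]; exact List.perm_middle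
      have hmap2 : (p :: M2).Pairwise (Compat F F') :=
        hperm.pairwise hmap (fun {x y} h => compat_symm F F' h)
      have hwtp : wt η M = wt η (p :: M2) := wt_perm η hperm
      obtain ⟨hcomp, hM2pair⟩ := List.pairwise_cons.mp hmap2
      have hmem2 : ∀ x ∈ M2, F.mem (L a) (L b) x.1 ∧ F'.mem (L' a') (L' b') x.2 :=
        fun x hx => hmem x (hperm.mem_iff.mpr (List.mem_cons_of_mem _ hx))
      obtain ⟨ia, hia1, hia2, hiav⟩ := hv_surj p.1
      obtain ⟨ia', hia'1, hia'2, hia'v⟩ := hv'_surj p.2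
      obtain ⟨hp1, hp2⟩ := hmem p hpM
      have hlr := F.l_add_two_le_r p.1
      have hlr' := F'.l_add_two_le_r p.2
      have hrle := F.r_le p.1
      have hrle' := F'.r_le p.2
      have haia : a ≤ ia := by
        by_contra hcon
        push_neg at hcon
        rcases Nat.lt_or_ge a (n + 1) with hc2 | hc2
        · have hmm := hv_mono ia a hia1 hcon (by omega)
          rw [hiav] at hmm
          have hLa : L a = F.l (v a) := hL.1 a h1 (by omega)
          have := hp1.1
          omega
        · have hae : a = n + 1 := by omega
          have hLa : L a = 2 * n + 1 := by rw [hae]; exact hL.2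
          have := hp1.1
          omega
      have hiable : ia ≤ b := by
        by_contra hcon
        push_neg at hcon
        have hbn : b ≤ n := by omega
        have hmm := hv_mono b ia (by omega) hcon hia2
        rw [hiav] at hmm
        have hLb : L b = F.l (v b) := hL.1 b (by omega) hbn
        have := hp1.2
        omega
      obtain ⟨hπ1, hπ2, hπ3, hπ4⟩ := hπ ia hia1 hia2
      have hπb : π ia ≤ b := by
        by_contra hcon
        push_neg at hcon
        have hbn : b ≤ n := by omega
        have hmemb := hπ3 b hiable hcon hbn
        rw [hiav] at hmemb
        have hLb : L b = F.l (v b) := hL.1 b (by omega) hbn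
        have hvb := F.l_add_two_le_r (v b)
        obtain ⟨hm1, hm2⟩ := hmemb
        have := hp1.2
        omega
      have haia' : a' ≤ ia' := by
        by_contra hcon
        push_neg at hcon
        rcases Nat.lt_or_ge a' (n' + 1) with hc2 | hc2
        · have hmm := hv'_mono ia' a' hia'1 hcon (by omega)
          rw [hia'v] at hmm
          have hLa : L' a' = F'.l (v' a') := hL'.1 a' h4 (by omega)
          have := hp2.1
          omega
        · have hae : a' = n' + 1 := by omega
          have hLa : L' a' = 2 * n' + 1 := by rw [hae]; exact hL'.2
          have := hp2.1
          omega
      have hiable' : ia' ≤ b' := by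
        by_contra hcon
        push_neg at hcon
        have hbn : b' ≤ n' := by omega
        have hmm := hv'_mono b' ia' (by omega) hcon hia'2
        rw [hia'v] at hmm
        have hLb : L' b' = F'.l (v' b') := hL'.1 b' (by omega) hbn
        have := hp2.2
        omega
      obtain ⟨hπ1', hπ2', hπ3', hπ4'⟩ := hπ' ia' hia'1 hia'2
      have hπb' : π' ia' ≤ b' := by
        by_contra hcon
        push_neg at hcon
        have hbn : b' ≤ n' := by omega
        have hmemb := hπ3' b' hiable' hcon hbn
        rw [hia'v] at hmemb
        have hLb : L' b' = F'.l (v' b') := hL'.1 b' (by omega) hbn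
        have hvb := F'.l_add_two_le_r (v' b')
        obtain ⟨hm1, hm2⟩ := hmemb
        have := hp2.2
        omega
      have hfacts : ∀ q ∈ M2, F.l p.1 < F.l q.1 ∧ F'.l p.2 < F'.l q.2 ∧
          (F.r q.1 < F.r p.1 ↔ F'.r q.2 < F'.r p.2) ∧ F.r q.1 ≠ F.r p.1 ∧
          F'.r q.2 ≠ F'.r p.2 := by
        intro q hq
        obtain ⟨hne1, hne2, hiff1, hiff2⟩ := hcomp q hq
        have hlle : F.l p.1 ≤ F.l q.1 := hpmin q (hperm.mem_iff.mpr (List.mem_cons_of_mem _ hq))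
        have hlne : F.l p.1 ≠ F.l q.1 := fun e => hne1 (l_inj F e)
        have hllt : F.l p.1 < F.l q.1 := by omega
        have hrne : F.r p.1 ≠ F.r q.1 := fun e => hne1 (r_inj F e)
        have hrne' : F'.r p.2 ≠ F'.r q.2 := fun e => hne2 (r_inj F' e)
        exact ⟨hllt, hiff1.mp hllt, by omega, by omega, by omega⟩
      set prB : Fin n × Fin n' → Bool := fun q => decide (F.r q.1 < F.r p.1) with hprdef
      set Min := M2.filter prB with hMindef
      set Mout := M2.filter (fun x => !prB x) with hMoutdef
      have hsplit : wt η M2 = wt η Min + wt η Mout := by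
        rw [← wt_append]
        exact (wt_perm η (List.filter_append_perm prB M2)).symm
      have hMinmem : ∀ x ∈ (p :: Min), F.mem (F.l (v ia)) (F.r (v ia)) x.1 ∧
          F'.mem (F'.l (v' ia')) (F'.r (v' ia')) x.2 := by
        intro x hx
        rw [hiav, hia'v]
        rcases List.mem_cons.mp hx with rfl | hx
        · exact ⟨⟨le_refl _, le_refl _⟩, ⟨le_refl _, le_refl _⟩⟩
        · obtain ⟨hxM2, hxf⟩ := List.mem_filter.mp hx
          have hflt : F.r x.1 < F.r p.1 := by simpa [hprdef] using hxf
          obtain ⟨hf1, hf2, hf3, hf4, hf5⟩ := hfacts x hxM2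
          have hflt' : F'.r x.2 < F'.r p.2 := hf3.mp hflt
          exact ⟨⟨le_of_lt hf1, le_of_lt hflt⟩, ⟨le_of_lt hf2, le_of_lt hflt'⟩⟩
      have hMinpair : IsMapping F F' (p :: Min) :=
        hmap2.sublist (List.filter_sublist.cons₂ p)
      have hMinle : wt η (p :: Min) ≤ W ia ia' :=
        (hW ia ia' hia1 hia2 hia'1 hia'2).2 ⟨p :: Min, hMinpair, hMinmem, rfl⟩
      have hMoutmem : ∀ x ∈ Mout,
          F.mem (L (π ia)) (L b) x.1 ∧ F'.mem (L' (π' ia')) (L' b') x.2 := by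
        intro x hx
        obtain ⟨hxM2, hxf⟩ := List.mem_filter.mp hx
        have hnlt : ¬ (F.r x.1 < F.r p.1) := by simpa [hprdef] using hxf
        obtain ⟨hf1, hf2, hf3, hf4, hf5⟩ := hfacts x hxM2
        have hrlt : F.r p.1 < F.r x.1 := by omega
        have hrlt' : F'.r p.2 < F'.r x.2 := by
          have hnn : ¬ F'.r x.2 < F'.r p.2 := fun hcc => hnlt (hf3.mpr hcc)
          omega
        have haft : F.r p.1 ≤ F.l x.1 := after_of_lt F hf1 hrlt
        have haft' : F'.r p.2 ≤ F'.l x.2 := after_of_lt F' hf2 hrlt'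
        obtain ⟨ib, hib1, hib2, hibv⟩ := hv_surj x.1
        obtain ⟨ib', hib'1, hib'2, hib'v⟩ := hv'_surj x.2
        have hialtib : ia < ib := by
          by_contra hcc
          push_neg at hcc
          rcases eq_or_lt_of_le hcc with he | hlt2
          · have hpe : p.1 = x.1 := by rw [← hiav, ← hibv, he]
            rw [hpe] at hf1
            omega
          · have hmm := hv_mono ib ia hib1 hlt2 hia2
            rw [hiav, hibv] at hmm
            omega
        have hπia_ib : π ia ≤ ib := by
          by_contra hcc
          push_neg at hcc
          have hmemb := hπ3 ib (le_of_lt hialtib) hcc hib2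
          rw [hiav, hibv] at hmemb
          obtain ⟨_, hm2⟩ := hmemb
          omega
        have hLπ : L (π ia) ≤ F.l x.1 := by
          have hmm := hLm (π ia) ib (by omega) hπia_ib (by omega)
          rwa [hL.1 ib hib1 hib2, hibv] at hmm
        have hia'ltib' : ia' < ib' := by
          by_contra hcc
          push_neg at hcc
          rcases eq_or_lt_of_le hcc with he | hlt2
          · have hpe : p.2 = x.2 := by rw [← hia'v, ← hib'v, he]
            rw [hpe] at hf2
            omega
          · have hmm := hv'_mono ib' ia' hib'1 hlt2 hia'2
            rw [hia'v, hib'v] at hmm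
            omega
        have hπia_ib' : π' ia' ≤ ib' := by
          by_contra hcc
          push_neg at hcc
          have hmemb := hπ3' ib' (le_of_lt hia'ltib') hcc hib'2
          rw [hia'v, hib'v] at hmemb
          obtain ⟨_, hm2⟩ := hmemb
          omega
        have hLπ' : L' (π' ia') ≤ F'.l x.2 := by
          have hmm := hLm' (π' ia') ib' (by omega) hπia_ib' (by omega)
          rwa [hL'.1 ib' hib'1 hib'2, hib'v] at hmm
        exact ⟨⟨hLπ, (hmem2 x hxM2).1.2⟩, ⟨hLπ', (hmem2 x hxM2).2.2⟩⟩
      have hMoutpair : IsMapping F F' Mout := hM2pair.sublist List.filter_sublist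
      have hlenM : M.length = M2.length + 1 := by
        have hle := hperm.length_eq
        simpa using hle
      have hlenout : Mout.length ≤ N := by
        have := List.length_filter_le (fun x => !prB x) M2
        rw [hMoutdef]
        omega
      obtain ⟨c, hcpath, hcle⟩ := ih Mout (π ia) b (π' ia') b' hlenout (by omega) hπb h3
        (by omega) hπb' h6 hMoutpair hMoutmem
      have P0 : PathW (Step n n' π π' W) (a, a') (ia, ia') 0 :=
        path_zero π π' W h1 haia (by omega) h4 haia' (by omega)
      have P3 : Step n n' π π' W (ia, ia') (π ia, π' ia') (W ia ia') :=
        ⟨hia1, by omega, hia'1, by omega, by omega, hπ2, by omega, hπ2',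
          Or.inr (Or.inr ⟨hia2, hia'2, rfl, rfl⟩)⟩
      have P4 : PathW (Step n n' π π' W) (a, a') (π ia, π' ia') (0 + W ia ia') :=
        PathW.tail P0 P3
      have P5 := pathw_trans P4 hcpath
      refine ⟨_, P5, ?_⟩
      have hwcons : wt η (p :: M2) = η p.1 p.2 + wt η M2 := by simp [wt]
      have hwcons2 : wt η (p :: Min) = η p.1 p.2 + wt η Min := by simp [wt]
      rw [hwtp, hwcons, hsplit]
      linarith [hMinle, hcle, hwcons2]
  -- T ≤ S
  have hTS : T ≤ S := by
    obtain ⟨M, hM, hmem, hTw⟩ := hT.1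
    obtain ⟨c, hcpath, hcle⟩ :=
      C M.length M i j i' j' (le_refl _) hi hij hj hi' hij' hj' hM hmem
    calc T = wt η M := hTw
      _ ≤ c := hcle
      _ ≤ S := hS.2 hcpath
  exact le_antisymm hST hTS


end Stmt15
end

section
/- Partition of a spine with bounded pieces: given spine nodes s ≺ q in S and a threshold Δ > 0, the greedy partition algorithm (repeatedly take the farthest spine node r_{i+1} with |sub(r_i)∖sub(r_{i+1})| ≤ Δ, or the immediate successor if none exists) produces a sequence s = r_1 ≺ r_2 ≺ ... ≺ r_d = q with d - 1 ≤ 2·|sub(s)∖sub(q)|/Δ + 1, such that for every i < d either |sub(r_i)∖sub(r_{i+1})| ≤ Δ or r_i immediately precedes r_{i+1} in S. -/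
namespace Stmt19

def Good (w : ℕ → ℕ) (b Δ a d : ℕ) (r : ℕ → ℕ) : Prop :=
  1 ≤ d ∧ r 0 = a ∧ r (d - 1) = b ∧
  (∀ i j, i < j → j ≤ d - 1 → r i < r j) ∧
  (∀ i, i ≤ d - 1 → a ≤ r i ∧ r i ≤ b) ∧
  (∀ i, i + 1 ≤ d - 1 → w (r i) - w (r (i + 1)) ≤ Δ ∨ r (i + 1) = r i + 1)

lemma good_single (w : ℕ → ℕ) (b Δ : ℕ) : Good w b Δ b 1 (fun _ => b) := by
  refine ⟨le_refl _, rfl, rfl, ?_, ?_, ?_⟩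
  · intro i j hij hj; omega
  · intro i _; exact ⟨le_refl _, le_refl _⟩
  · intro i hi; omega

lemma good_extend (w : ℕ → ℕ) (b Δ a a' d' : ℕ) (r' : ℕ → ℕ)
    (h1 : a < a') (hstep : w a - w a' ≤ Δ ∨ a' = a + 1)
    (hg : Good w b Δ a' d' r') :
    Good w b Δ a (d' + 1) (fun i => if i = 0 then a else r' (i - 1)) := by
  obtain ⟨hd1, h0, hlast, hmono, hrange, hsteps⟩ := hg
  refine ⟨by omega, by simp, ?_, ?_, ?_, ?_⟩
  · show (if d' + 1 - 1 = 0 then a else r' (d' + 1 - 1 - 1)) = b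
    rw [if_neg (by omega)]
    have e : d' + 1 - 1 - 1 = d' - 1 := by omega
    rw [e]; exact hlast
  · intro i j hij hj
    rcases Nat.eq_zero_or_pos i with hi0 | hi0
    · subst hi0
      show a < (if j = 0 then a else r' (j - 1))
      rw [if_neg (by omega)]
      have hx : r' 0 ≤ r' (j - 1) := by
        rcases Nat.eq_zero_or_pos (j - 1) with h | h
        · rw [h]
        · exact le_of_lt (hmono 0 (j - 1) h (by omega))
      rw [h0] at hx; omega
    · show (if i = 0 then a else r' (i - 1)) < (if j = 0 then a else r' (j - 1))
      rw [if_neg (by omega), if_neg (by omega)]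
      exact hmono (i - 1) (j - 1) (by omega) (by omega)
  · intro i hi
    rcases Nat.eq_zero_or_pos i with hi0 | hi0
    · subst hi0
      show a ≤ (if (0:ℕ) = 0 then a else r' (0 - 1)) ∧
        (if (0:ℕ) = 0 then a else r' (0 - 1)) ≤ b
      rw [if_pos rfl]
      have := (hrange 0 (by omega)).2
      rw [h0] at this
      exact ⟨le_refl _, by omega⟩
    · show a ≤ (if i = 0 then a else r' (i - 1)) ∧ (if i = 0 then a else r' (i - 1)) ≤ b
      rw [if_neg (by omega)]
      have := hrange (i - 1) (by omega)
      exact ⟨by omega, this.2⟩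
  · intro i hi
    rcases Nat.eq_zero_or_pos i with hi0 | hi0
    · subst hi0
      show w (if 0 = 0 then a else r' (0-1)) - w (if (0:ℕ) + 1 = 0 then a else r' (0 + 1 - 1)) ≤ Δ ∨
        (if (0:ℕ) + 1 = 0 then a else r' (0 + 1 - 1)) = (if 0 = 0 then a else r' (0-1)) + 1
      simp only [if_pos rfl, if_neg (by omega : (0:ℕ) + 1 ≠ 0)]
      have e : (0:ℕ) + 1 - 1 = 0 := by omega
      rw [e, h0]
      exact hstep
    · show w (if i = 0 then a else r' (i-1)) - w (if i + 1 = 0 then a else r' (i + 1 - 1)) ≤ Δ ∨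
        (if i + 1 = 0 then a else r' (i + 1 - 1)) = (if i = 0 then a else r' (i-1)) + 1
      rw [if_neg (by omega), if_neg (by omega)]
      have := hsteps (i - 1) (by omega)
      have e1 : i + 1 - 1 = (i - 1) + 1 := by omega
      rw [e1]
      exact this

lemma main_lemma (w : ℕ → ℕ) (b Δ : ℕ) (hΔ : 0 < Δ)
    (hw : ∀ p q, p ≤ q → q ≤ b → w q ≤ w p) :
    ∀ n a, a ≤ b → b - a ≤ n →
      ∃ d r, Good w b Δ a d r ∧ Δ * (d - 1) ≤ 2 * (w a - w b) + Δ := by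
  intro n
  induction n with
  | zero =>
    intro a hab hba
    have hae : a = b := by omega
    rw [hae]
    exact ⟨1, fun _ => b, good_single w b Δ, by simp⟩
  | succ n ih =>
    intro a hab hba
    rcases eq_or_lt_of_le hab with hae | hab'
    · rw [hae]
      exact ⟨1, fun _ => b, good_single w b Δ, by simp⟩
    by_cases hAB : w a - w b ≤ Δ
    · refine ⟨2, _, good_extend w b Δ a b 1 (fun _ => b) hab' (Or.inl hAB)
        (good_single w b Δ), ?_⟩
      simp
    by_cases hB1 : Δ < w a - w (a + 1)
    · obtain ⟨d', r', hg, hb'⟩ := ih (a + 1) (by omega) (by omega)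
      refine ⟨d' + 1, _, good_extend w b Δ a (a + 1) d' r' (by omega) (Or.inr rfl) hg, ?_⟩
      have h1 : w (a + 1) ≤ w a := hw a (a + 1) (by omega) (by omega)
      have h2 : w b ≤ w (a + 1) := hw (a + 1) b (by omega) (le_refl b)
      have hd1 : 1 ≤ d' := hg.1
      have e : d' + 1 - 1 = (d' - 1) + 1 := by omega
      rw [e, Nat.mul_add, Nat.mul_one]
      generalize hX : Δ * (d' - 1) = X at hb' ⊢
      omega
    · push_neg at hB1
      set c := Nat.findGreatest (fun c => w a - w c ≤ Δ) b with hcdef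
      have hc1 : a + 1 ≤ c := Nat.le_findGreatest (by omega) hB1
      have hcb : c ≤ b := Nat.findGreatest_le b
      have hPc : w a - w c ≤ Δ := Nat.findGreatest_spec (P := fun c => w a - w c ≤ Δ)
        (by omega : a + 1 ≤ b) hB1
      have hcb' : c < b := by
        rcases eq_or_lt_of_le hcb with h | h
        · exfalso; rw [h] at hPc; exact hAB hPc
        · exact h
      have hnext : ¬ (w a - w (c + 1) ≤ Δ) :=
        Nat.findGreatest_is_greatest (P := fun x => w a - w x ≤ Δ) (n := b) (k := c + 1)
          (by rw [← hcdef]; omega) (by omega)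
      have hexists : ∃ c', c < c' ∧ c' ≤ b ∧ (w c - w c' ≤ Δ ∨ c' = c + 1) := by
        by_cases hB2 : w c - w (c + 1) ≤ Δ
        · have h1 := Nat.le_findGreatest (P := fun x => w c - w x ≤ Δ) (by omega : c + 1 ≤ b) hB2
          have h2 := Nat.findGreatest_le (P := fun x => w c - w x ≤ Δ) b
          have h3 := Nat.findGreatest_spec (P := fun x => w c - w x ≤ Δ) (by omega : c + 1 ≤ b) hB2
          exact ⟨Nat.findGreatest (fun x => w c - w x ≤ Δ) b, by omega, h2, Or.inl h3⟩
        · exact ⟨c + 1, by omega, by omega, Or.inr rfl⟩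
      obtain ⟨c', hcc', hc'b, hstep2⟩ := hexists
      have hwc' : w c' ≤ w (c + 1) := hw (c + 1) c' (by omega) hc'b
      have hkey : Δ < w a - w c' := by omega
      obtain ⟨d'', r'', hg, hb''⟩ := ih c' (by omega) (by omega)
      refine ⟨d'' + 2, _, good_extend w b Δ a c (d'' + 1) _ (by omega) (Or.inl hPc)
        (good_extend w b Δ c c' d'' r'' hcc' hstep2 hg), ?_⟩
      have h1 : w c' ≤ w a := hw a c' (by omega) hc'b
      have h2 : w b ≤ w c' := hw c' b hc'b (le_refl b)
      have hd1 : 1 ≤ d'' := hg.1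
      have e : d'' + 2 - 1 = (d'' - 1) + 2 := by omega
      rw [e, Nat.mul_add]
      generalize hX : Δ * (d'' - 1) = X at hb'' ⊢
      have : Δ * 2 = 2 * Δ := by ring
      omega

/-- greedy partition of a spine with bounded pieces: model the
spine by positions `a, …, b` (consecutive positions are spine nodes one of
which immediately precedes the other) together with the antitone size function
`w p = |sub(s_p)|`, so that `|sub(s_p) ∖ sub(s_q)| = w p - w q` for `p ≤ q`.
Given a threshold `Δ > 0`, there is a sequence of positions
`a = r 0 < r 1 < ⋯ < r (d-1) = b` such that for every `i < d - 1` either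
`|sub(r i) ∖ sub(r (i+1))| ≤ Δ` or `r (i+1)` is the immediate successor of
`r i`, and whose length satisfies `d - 1 ≤ 2·|sub(s) ∖ sub(q)|/Δ + 1`,
stated multiplicatively as `Δ·(d - 1) ≤ 2·(w a - w b) + Δ`. -/
theorem stmt19 (w : ℕ → ℕ) (a b Δ : ℕ) (hab : a < b) (hΔ : 0 < Δ)
    (hw : ∀ p q, a ≤ p → p ≤ q → q ≤ b → w q ≤ w p) :
    ∃ (d : ℕ) (r : ℕ → ℕ), 1 ≤ d ∧ r 0 = a ∧ r (d - 1) = b ∧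
      (∀ i j, i < j → j ≤ d - 1 → r i < r j) ∧
      (∀ i, i ≤ d - 1 → a ≤ r i ∧ r i ≤ b) ∧
      (∀ i, i + 1 ≤ d - 1 → w (r i) - w (r (i + 1)) ≤ Δ ∨ r (i + 1) = r i + 1) ∧
      Δ * (d - 1) ≤ 2 * (w a - w b) + Δ := by
  set w' : ℕ → ℕ := fun p => w (max a p) with hw'def
  have hw' : ∀ p q, p ≤ q → q ≤ b → w' q ≤ w' p := by
    intro p q hpq hqb
    exact hw (max a p) (max a q) (le_max_left a p) (max_le_max (le_refl a) hpq)
      (max_le (le_of_lt hab) hqb)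
  obtain ⟨d, r, ⟨hd1, h0, hlast, hmono, hrange, hsteps⟩, hbound⟩ :=
    main_lemma w' b Δ hΔ hw' (b - a) a (le_of_lt hab) (le_refl _)
  have hwa : w' a = w a := by simp [hw'def]
  have hwb : w' b = w b := by simp [hw'def, max_eq_right (le_of_lt hab)]
  refine ⟨d, r, hd1, h0, hlast, hmono, hrange, ?_, by rwa [hwa, hwb] at hbound⟩
  intro i hi
  have h1 := (hrange i (by omega)).1
  have h2 := (hrange (i + 1) (by omega)).1
  have e1 : w' (r i) = w (r i) := by simp [hw'def, max_eq_right h1]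
  have e2 : w' (r (i + 1)) = w (r (i + 1)) := by simp [hw'def, max_eq_right h2]
  have := hsteps i hi
  rwa [e1, e2] at this

end Stmt19
end
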